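/- arXiv:cs/0011018 — 9 statements merged into one kernel-verified Lean document; each statement's English description precedes it below -/
import Mathlib

section
/- For n ≥ 2 and α, β > 1, the determinant of the n×n matrix K defined by K(i,j) = α^(i-j) if i ≤ j and K(i,j) = β^(j-i) if i > j equals (1 - α⁻¹β⁻¹)^(n-1), which is strictly positive. -/
theorem det_K (n : ℕ) (hn : 2 ≤ n) (α β : ℝ) (hα : 1 < α) (hβ : 1 < β)
    (K : Matrix (Fin n) (Fin n) ℝ)
    (hK : ∀ i j : Fin n, K i j =
      if (i : ℕ) ≤ (j : ℕ) then α ^ ((i : ℤ) - (j : ℤ)) else β ^ ((j : ℤ) - (i : ℤ))) :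
    K.det = (1 - α⁻¹ * β⁻¹) ^ (n - 1) ∧ 0 < (1 - α⁻¹ * β⁻¹) ^ (n - 1) := by
  have hα0 : (0:ℝ) < α := lt_trans one_pos hα
  have hβ0 : (0:ℝ) < β := lt_trans one_pos hβ
  have hαne : α ≠ 0 := ne_of_gt hα0
  have hβne : β ≠ 0 := ne_of_gt hβ0
  -- positivity
  have hab : α⁻¹ * β⁻¹ < 1 := by
    have h1 : α⁻¹ < 1 := inv_lt_one_of_one_lt₀ hα
    have h2 : β⁻¹ < 1 := inv_lt_one_of_one_lt₀ hβ
    have h3 : (0:ℝ) < α⁻¹ := inv_pos.mpr hα0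
    have h4 : (0:ℝ) < β⁻¹ := inv_pos.mpr hβ0
    nlinarith
  have hpos : 0 < (1 - α⁻¹ * β⁻¹) ^ (n - 1) := pow_pos (by linarith) _
  refine ⟨?_, hpos⟩
  -- the row-operation matrix
  set L : Matrix (Fin n) (Fin n) ℝ :=
    fun i j => if (i:ℕ) = (j:ℕ) then 1 else if (i:ℕ) = (j:ℕ) + 1 then -β⁻¹ else 0 with hLdef
  have hLlow : L.BlockTriangular OrderDual.toDual := by
    intro i j hij
    simp only [OrderDual.toDual_lt_toDual] at hij
    have : (i:ℕ) < (j:ℕ) := hij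
    simp only [hLdef]
    rw [if_neg (by omega), if_neg (by omega)]
  have hLdet : L.det = 1 := by
    rw [Matrix.det_of_lowerTriangular L hLlow]
    apply Finset.prod_eq_one
    intro i _
    simp [hLdef]
  -- compute rows of L * K
  have key : ∀ (m : ℕ) (hm1 : m + 1 < n) (j : Fin n),
      (L * K) ⟨m+1, hm1⟩ j = K ⟨m+1, hm1⟩ j - β⁻¹ * K ⟨m, by omega⟩ j := by
    intro m hm1 j
    rw [Matrix.mul_apply]
    set i : Fin n := ⟨m+1, hm1⟩ with hi
    set i' : Fin n := ⟨m, by omega⟩ with hi'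
    have hne : i' ≠ i := by simp [hi, hi', Fin.ext_iff]
    have hvanish : ∀ k ∈ Finset.univ, k ∉ ({i', i} : Finset (Fin n)) →
        L i k * K k j = 0 := by
      intro k _ hk
      simp only [Finset.mem_insert, Finset.mem_singleton, not_or] at hk
      have h1' : (k:ℕ) ≠ m := by
        intro h; exact hk.1 (by apply Fin.ext; simp [hi', h])
      have h2' : (k:ℕ) ≠ m + 1 := by
        intro h; exact hk.2 (by apply Fin.ext; simp [hi, h])
      have : L i k = 0 := by
        simp only [hLdef, hi]
        rw [if_neg (by omega), if_neg (by omega)]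
      rw [this, zero_mul]
    rw [← Finset.sum_subset (Finset.subset_univ ({i', i} : Finset (Fin n))) hvanish,
      Finset.sum_pair hne]
    have h1 : L i i' = -β⁻¹ := by
      simp only [hLdef, hi, hi']
      rw [if_neg (by simp), if_pos (by simp)]
    have h2 : L i i = 1 := by simp [hLdef]
    rw [h1, h2]; ring
  have key0 : ∀ (j : Fin n), (L * K) ⟨0, by omega⟩ j = K ⟨0, by omega⟩ j := by
    intro j
    rw [Matrix.mul_apply]
    set i : Fin n := ⟨0, by omega⟩ with hi
    have hvanish : ∀ k ∈ Finset.univ, k ∉ ({i} : Finset (Fin n)) →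
        L i k * K k j = 0 := by
      intro k _ hk
      simp only [Finset.mem_singleton] at hk
      have hk0 : (k:ℕ) ≠ 0 := by
        intro h; exact hk (by apply Fin.ext; simp [hi, h])
      have : L i k = 0 := by
        simp only [hLdef, hi]
        rw [if_neg (by omega), if_neg (by omega)]
      rw [this, zero_mul]
    rw [← Finset.sum_subset (Finset.subset_univ ({i} : Finset (Fin n))) hvanish,
      Finset.sum_singleton]
    have h2 : L i i = 1 := by simp [hLdef]
    rw [h2, one_mul]
  -- L * K is upper triangular
  have hMup : (L * K).BlockTriangular id := by
    intro i j hij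
    have hij' : (j:ℕ) < (i:ℕ) := hij
    obtain ⟨m, hm⟩ : ∃ m, (i:ℕ) = m + 1 := ⟨(i:ℕ) - 1, by omega⟩
    have hm1 : m + 1 < n := hm ▸ i.isLt
    have : i = ⟨m+1, hm1⟩ := Fin.ext hm
    rw [this, key m hm1 j]
    rw [hK, hK]
    rcases Nat.lt_or_ge (j:ℕ) m with hlt | hge
    · rw [if_neg (by simp; omega), if_neg (by simp; omega)]
      have : ((j:ℤ) - (⟨m+1, hm1⟩ : Fin n)) = ((j:ℤ) - (⟨m, by omega⟩ : Fin n)) + (-1) := by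
        simp; ring
      rw [this, zpow_add₀ hβne, zpow_neg_one]
      ring
    · have hje : (j:ℕ) = m := by omega
      rw [if_neg (by simp; omega), if_pos (by simp; omega)]
      have e1 : ((j:ℤ) - (⟨m+1, hm1⟩ : Fin n)) = -1 := by simp; omega
      have e2 : ((⟨m, by omega⟩ : Fin n) : ℤ) - (j:ℤ) = 0 := by simp; omega
      rw [e1, e2, zpow_neg_one, zpow_zero]
      ring
  rw [show K.det = (L * K).det by rw [Matrix.det_mul, hLdet, one_mul],
    Matrix.det_of_upperTriangular hMup]
  -- compute diagonal
  have hdiag : ∀ i : Fin n, (L * K) i i = if (i:ℕ) = 0 then 1 else 1 - α⁻¹ * β⁻¹ := by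
    intro i
    rcases Nat.eq_zero_or_pos (i:ℕ) with h0 | hpos'
    · have : i = ⟨0, by omega⟩ := Fin.ext h0
      rw [this, key0, hK, if_pos le_rfl, if_pos (by simpa using h0)]
      simp
    · obtain ⟨m, hm⟩ : ∃ m, (i:ℕ) = m + 1 := ⟨(i:ℕ) - 1, by omega⟩
      have hm1 : m + 1 < n := hm ▸ i.isLt
      have : i = ⟨m+1, hm1⟩ := Fin.ext hm
      rw [this, key m hm1, hK, hK, if_pos le_rfl, if_pos (by simp)]
      have e1 : ((⟨m+1, hm1⟩ : Fin n) : ℤ) - ((⟨m+1, hm1⟩ : Fin n) : ℤ) = 0 := by ring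
      have e2 : ((⟨m, by omega⟩ : Fin n) : ℤ) - ((⟨m+1, hm1⟩ : Fin n) : ℤ) = -1 := by
        push_cast
        ring
      rw [e1, e2, zpow_zero, zpow_neg_one, if_neg (by simp)]
      ring
  obtain ⟨m, rfl⟩ : ∃ m, n = m + 1 := ⟨n - 1, by omega⟩
  rw [Fin.prod_univ_succ]
  have h0 : (L * K) 0 0 = 1 := by rw [hdiag]; simp
  rw [h0, one_mul]
  have : ∀ i : Fin m, (L * K) i.succ i.succ = 1 - α⁻¹ * β⁻¹ := by
    intro i
    rw [hdiag, if_neg (by simp [Fin.val_succ])]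
  rw [Finset.prod_congr rfl (fun i _ => this i), Finset.prod_const]
  simp
end

section
/- For n ≥ 2 and α, β > 1, the matrix K (with K(i,j) = α^(i-j) if i ≤ j, β^(j-i) if i > j) is invertible. -/
open Finset

lemma sum_ind' {n : ℕ} (f : Fin n → ℝ) (m : ℕ) :
    ∑ k : Fin n, (if (k : ℕ) = m then f k else 0) =
      if hm : m < n then f ⟨m, hm⟩ else 0 := by
  split_ifs with hm
  · have h : ∀ k : Fin n, ((k : ℕ) = m) = (k = ⟨m, hm⟩) := by
      intro k; simp [Fin.ext_iff]
    simp_rw [h]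
    simp
  · apply Finset.sum_eq_zero
    intro k _
    have hk := k.isLt
    have : ¬ ((k : ℕ) = m) := by omega
    simp [this]

lemma sum_ite_const {n : ℕ} (c : Prop) [Decidable c] (f : Fin n → ℝ) :
    ∑ k : Fin n, (if c then f k else 0) = if c then ∑ k : Fin n, f k else 0 := by
  split_ifs <;> simp

lemma aux (n p q : ℕ) (a b : ℝ) (hn : 2 ≤ n) (hp : p < n) (hq : q < n) :
    (if p = 0 ∨ p = n - 1 then (1:ℝ) else 1 + a * b) *
        (if p ≤ q then a ^ (q - p) else b ^ (p - q)) +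
      ((if 1 ≤ p then -b * (if p - 1 ≤ q then a ^ (q - (p - 1)) else b ^ (p - 1 - q)) else 0) +
        (if p + 1 < n then -a * (if p + 1 ≤ q then a ^ (q - (p + 1)) else b ^ (p + 1 - q)) else 0)) =
    if p = q then 1 - a * b else 0 := by
  split_ifs <;> try omega
  · rw [show q - p = 0 by omega, show q - (p - 1) = 1 by omega]; ring
  · rw [show q - p = (q - (p + 1)) + 1 by omega, pow_succ]; ring
  · rw [show q - p = 0 by omega, show p + 1 - q = 1 by omega]; ring
  · rw [show p - q = 1 by omega, show q - (p - 1) = 0 by omega]; ring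
  · rw [show p - q = (p - 1 - q) + 1 by omega, pow_succ]; ring
  · rw [show q - (p - 1) = (q - (p + 1)) + 2 by omega,
      show q - p = (q - (p + 1)) + 1 by omega]
    simp only [pow_succ]; ring
  · rw [show q - p = 0 by omega, show q - (p - 1) = 1 by omega,
      show p + 1 - q = 1 by omega]; ring
  · rw [show p - q = 1 by omega, show q - (p - 1) = 0 by omega,
      show p + 1 - q = 2 by omega]; ring
  · rw [show p - q = (p - 1 - q) + 1 by omega,
      show p + 1 - q = (p - 1 - q) + 2 by omega]
    simp only [pow_succ]; ring

theorem K_invertible (n : ℕ) (hn : 2 ≤ n) (α β : ℝ) (hα : 1 < α) (hβ : 1 < β)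
    (K : Matrix (Fin n) (Fin n) ℝ)
    (hK : ∀ i j : Fin n, K i j =
      if (i : ℕ) ≤ (j : ℕ) then α ^ ((i : ℤ) - (j : ℤ)) else β ^ ((j : ℤ) - (i : ℤ))) :
    IsUnit K := by
  have hα0 : (0:ℝ) < α := lt_trans one_pos hα
  have hβ0 : (0:ℝ) < β := lt_trans one_pos hβ
  set a : ℝ := α⁻¹ with ha_def
  set b : ℝ := β⁻¹ with hb_def
  have ha0 : 0 < a := inv_pos.mpr hα0
  have hb0 : 0 < b := inv_pos.mpr hβ0
  have ha1 : a < 1 := inv_lt_one_of_one_lt₀ hα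
  have hb1 : b < 1 := inv_lt_one_of_one_lt₀ hβ
  have hab : a * b < 1 := by nlinarith
  have hδ : (1 : ℝ) - a * b ≠ 0 := by nlinarith
  have hK' : ∀ i j : Fin n, K i j =
      if (i : ℕ) ≤ (j : ℕ) then a ^ ((j:ℕ) - (i:ℕ)) else b ^ ((i:ℕ) - (j:ℕ)) := by
    intro i j
    rw [hK i j]
    split_ifs with h
    · have e : (i:ℤ) - (j:ℤ) = -(((j:ℕ) - (i:ℕ) : ℕ) : ℤ) := by omega
      rw [e, zpow_neg, zpow_natCast, ha_def, inv_pow]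
    · have e : (j:ℤ) - (i:ℤ) = -(((i:ℕ) - (j:ℕ) : ℕ) : ℤ) := by omega
      rw [e, zpow_neg, zpow_natCast, hb_def, inv_pow]
  set B : Matrix (Fin n) (Fin n) ℝ := fun i k =>
    (1 - a * b)⁻¹ *
      ((if (k : ℕ) = (i : ℕ) then (if (i:ℕ) = 0 ∨ (i:ℕ) = n - 1 then (1:ℝ) else 1 + a * b) else 0) +
        ((if 1 ≤ (i : ℕ) then (if (k : ℕ) = (i : ℕ) - 1 then -b else 0) else 0) +
          (if (i : ℕ) + 1 < n then (if (k : ℕ) = (i : ℕ) + 1 then -a else 0) else 0))) with hBdef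
  have hBK : B * K = 1 := by
    ext i j
    rw [Matrix.mul_apply, Matrix.one_apply]
    have expand : ∀ k : Fin n, B i k * K k j =
        (1 - a * b)⁻¹ *
          ((if (k : ℕ) = (i : ℕ) then (if (i:ℕ) = 0 ∨ (i:ℕ) = n - 1 then (1:ℝ) else 1 + a * b) * K k j else 0) +
            ((if 1 ≤ (i : ℕ) then (if (k : ℕ) = (i : ℕ) - 1 then -b * K k j else 0) else 0) +
              (if (i : ℕ) + 1 < n then (if (k : ℕ) = (i : ℕ) + 1 then -a * K k j else 0) else 0))) := by
      intro k
      simp only [hBdef]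
      split_ifs <;> ring
    calc ∑ k : Fin n, B i k * K k j
        = (1 - a * b)⁻¹ * ∑ k : Fin n,
          ((if (k : ℕ) = (i : ℕ) then (if (i:ℕ) = 0 ∨ (i:ℕ) = n - 1 then (1:ℝ) else 1 + a * b) * K k j else 0) +
            ((if 1 ≤ (i : ℕ) then (if (k : ℕ) = (i : ℕ) - 1 then -b * K k j else 0) else 0) +
              (if (i : ℕ) + 1 < n then (if (k : ℕ) = (i : ℕ) + 1 then -a * K k j else 0) else 0))) := by
          rw [Finset.mul_sum]; exact Finset.sum_congr rfl fun k _ => expand k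
      _ = if i = j then 1 else 0 := by
          rw [Finset.sum_add_distrib]
          rw [Finset.sum_add_distrib]
          rw [sum_ind' (fun k => (if (i:ℕ) = 0 ∨ (i:ℕ) = n - 1 then (1:ℝ) else 1 + a * b) * K k j) (i:ℕ)]
          rw [sum_ite_const, sum_ite_const]
          rw [sum_ind' (fun k => -b * K k j) ((i:ℕ) - 1)]
          rw [sum_ind' (fun k => -a * K k j) ((i:ℕ) + 1)]
          rw [dif_pos i.isLt, dif_pos (show (i:ℕ) - 1 < n by omega)]
          have key := aux n (i:ℕ) (j:ℕ) a b hn i.isLt j.isLt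
          rw [Fin.eta]
          by_cases h2 : (i:ℕ) + 1 < n
          · rw [if_pos h2, dif_pos h2]
            rw [if_pos h2] at key
            simp only [hK', Fin.ext_iff]
            by_cases hpq : (i:ℕ) = (j:ℕ)
            · rw [if_pos hpq] at key ⊢; rw [key]; field_simp
            · rw [if_neg hpq] at key ⊢; rw [key]; ring
          · rw [if_neg h2]
            rw [if_neg h2] at key
            simp only [hK', Fin.ext_iff]
            by_cases hpq : (i:ℕ) = (j:ℕ)
            · rw [if_pos hpq] at key ⊢; rw [key]; field_simp
            · rw [if_neg hpq] at key ⊢; rw [key]; ring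
  exact (Matrix.isUnit_iff_isUnit_det K).mpr (Matrix.isUnit_det_of_left_inverse hBK)
end

section
/- With D = nαβ - (n-1)(α+β) + (n-2) and r = D/(αβ-1), let b̄ ∈ ℝⁿ have components b̄_1 = α(β-1)/(αβ-1), b̄_n = (α-1)β/(αβ-1), and b̄_i = (α-1)(β-1)/(αβ-1) for 1 < i < n. Then for every j ∈ {1,...,n}, the inner product ∑_{i=1}^n b̄_i K(i,j) = 1, i.e., b̄ᵀK = uᵀ where u is the all-ones vector. -/
theorem bbar_mul_K_eq_one (n : ℕ) (hn : 2 ≤ n) (α β : ℝ) (hα : 1 < α) (hβ : 1 < β)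
    (K : Matrix (Fin n) (Fin n) ℝ)
    (hK : ∀ i j : Fin n, K i j =
      if (i : ℕ) ≤ (j : ℕ) then α ^ ((i : ℤ) - (j : ℤ)) else β ^ ((j : ℤ) - (i : ℤ)))
    (b : Fin n → ℝ)
    (hb : ∀ i : Fin n, b i =
      if (i : ℕ) = 0 then α * (β - 1) / (α * β - 1)
      else if (i : ℕ) = n - 1 then (α - 1) * β / (α * β - 1)
      else (α - 1) * (β - 1) / (α * β - 1)) :
    ∀ j : Fin n, ∑ i, b i * K i j = 1 := by
  intro j
  have hα0 : α ≠ 0 := by linarith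
  have hβ0 : β ≠ 0 := by linarith
  have hD : α * β - 1 ≠ 0 := by nlinarith
  have hn1 : 1 ≤ n := by omega
  set jv : ℕ := (j : ℕ) with hjv
  have hjn : jv < n := j.is_lt
  set c : ℕ → ℝ := fun i =>
    if i = 0 then α * (β - 1) else if i = n - 1 then (α - 1) * β else (α - 1) * (β - 1) with hc
  set k : ℕ → ℝ := fun i =>
    if i ≤ jv then α ^ ((i : ℤ) - (jv : ℤ)) else β ^ ((jv : ℤ) - (i : ℤ)) with hk
  set G : ℕ → ℝ := fun i =>
    if i ≤ jv then (β - 1) * α ^ ((i : ℤ) - (jv : ℤ))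
    else -((α - 1) * β ^ ((jv : ℤ) - (i : ℤ) + 1)) with hG
  have hterm : ∀ i : Fin n, b i * K i j = c (i : ℕ) * k (i : ℕ) / (α * β - 1) := by
    intro i
    rw [hb, hK, hc, hk]
    simp only
    split_ifs <;> push_cast <;> ring
  have key : ∑ i ∈ Finset.range n, c i * k i = α * β - 1 := by
    have tele : ∀ i ∈ Finset.range n, c i * k i =
        (G (i + 1) - G i) + ((if i = jv then α * β - 1 else 0)
          + ((if i = 0 then G 0 else 0) + (if i = n - 1 then -(G n) else 0))) := by
      intro i hi
      rw [Finset.mem_range] at hi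
      have hA : 0 ≤ jv := Nat.zero_le _
      have hB : ¬ n ≤ jv := by omega
      rcases lt_trichotomy i jv with h | h | h
      · -- i < jv
        have h1 : i ≤ jv := le_of_lt h
        have h2 : i + 1 ≤ jv := h
        have h3 : i ≠ n - 1 := by omega
        have h4 : i ≠ jv := ne_of_lt h
        rcases eq_or_ne i 0 with rfl | h0
        · simp only [hc, hk, hG]
          simp [h1, h2, h3, h4, hA]
          rw [show (1 : ℤ) - (jv : ℤ) = (-(jv : ℤ)) + 1 by ring, zpow_add_one₀ hα0,
            zpow_neg, zpow_natCast]
          ring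
        · simp only [hc, hk, hG]
          simp [h1, h2, h3, h4, h0]
          rw [show (i : ℤ) + 1 - (jv : ℤ) = ((i : ℤ) - (jv : ℤ)) + 1 by ring,
            zpow_add_one₀ hα0]
          ring
      · -- i = jv
        have h1 : i ≤ jv := le_of_eq h
        have h2 : ¬ (i + 1 ≤ jv) := by omega
        have e1 : ((i : ℕ) : ℤ) - (jv : ℤ) = 0 := by omega
        have e2 : (jv : ℤ) - ((i : ℤ) + 1) + 1 = 0 := by omega
        rcases eq_or_ne i 0 with rfl | h0
        · have h3 : (0 : ℕ) ≠ n - 1 := by omega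
          simp only [hc, hk, hG]
          simp [h1, h2, h3, iff_true_intro h, e1, e2]
          rw [← h]; norm_num; ring
        · rcases eq_or_ne i (n - 1) with h5 | h5
          · have e3 : (jv : ℤ) - ((n : ℕ) : ℤ) + 1 = 0 := by omega
            simp only [hc, hk, hG]
            simp [h1, h2, h0, iff_true_intro h5, iff_true_intro h, hB, e1, e2, e3]
            ring
          · simp only [hc, hk, hG]
            simp [h1, h2, h0, h5, iff_true_intro h, e1, e2]
            ring
      · -- i > jv
        have h1 : ¬ (i ≤ jv) := by omega
        have h2 : ¬ (i + 1 ≤ jv) := by omega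
        have h4 : i ≠ jv := by omega
        have h0 : i ≠ 0 := by omega
        rcases eq_or_ne i (n - 1) with h5 | h5
        · have e3 : (jv : ℤ) - ((n : ℕ) : ℤ) + 1 = (jv : ℤ) - (i : ℤ) := by omega
          simp only [hc, hk, hG]
          simp [h1, h2, h4, h0, iff_true_intro h5, hB, e3]
          rw [show (jv : ℤ) - ((i : ℤ) + 1) + 1 = (jv : ℤ) - (i : ℤ) by ring,
            show (jv : ℤ) - (i : ℤ) + 1 = ((jv : ℤ) - (i : ℤ)) + 1 by ring,
            zpow_add_one₀ hβ0]
          ring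
        · simp only [hc, hk, hG]
          simp [h1, h2, h4, h0, h5]
          rw [show (jv : ℤ) - ((i : ℤ) + 1) + 1 = (jv : ℤ) - (i : ℤ) by ring,
            show (jv : ℤ) - (i : ℤ) + 1 = ((jv : ℤ) - (i : ℤ)) + 1 by ring,
            zpow_add_one₀ hβ0]
          ring
    rw [Finset.sum_congr rfl tele]
    rw [Finset.sum_add_distrib, Finset.sum_add_distrib, Finset.sum_add_distrib,
      Finset.sum_range_sub]
    rw [Finset.sum_ite_eq' (Finset.range n) jv (fun _ => α * β - 1),
      Finset.sum_ite_eq' (Finset.range n) 0 (fun _ => G 0),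
      Finset.sum_ite_eq' (Finset.range n) (n - 1) (fun _ => -(G n))]
    simp only [Finset.mem_range, hjn, if_pos, (by omega : 0 < n), (by omega : n - 1 < n)]
    ring
  calc ∑ i, b i * K i j = ∑ i : Fin n, c (i : ℕ) * k (i : ℕ) / (α * β - 1) := by
        exact Finset.sum_congr rfl fun i _ => hterm i
    _ = ∑ i ∈ Finset.range n, c i * k i / (α * β - 1) := by
        exact Fin.sum_univ_eq_sum_range (fun m => c m * k m / (α * β - 1)) n
    _ = (∑ i ∈ Finset.range n, c i * k i) / (α * β - 1) := by
        rw [Finset.sum_div]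
    _ = 1 := by rw [key]; field_simp
end

section
/- Let c̄ ∈ ℝⁿ have components c̄_1 = (α-1)β/(αβ-1), c̄_n = α(β-1)/(αβ-1), and c̄_i = (α-1)(β-1)/(αβ-1) for 1 < i < n. Then K c̄ = u, the all-ones vector. -/
theorem K_mul_cbar_eq_one (n : ℕ) (hn : 2 ≤ n) (α β : ℝ) (hα : 1 < α) (hβ : 1 < β)
    (K : Matrix (Fin n) (Fin n) ℝ)
    (hK : ∀ i j : Fin n, K i j =
      if (i : ℕ) ≤ (j : ℕ) then α ^ ((i : ℤ) - (j : ℤ)) else β ^ ((j : ℤ) - (i : ℤ)))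
    (c : Fin n → ℝ)
    (hc : ∀ i : Fin n, c i =
      if (i : ℕ) = 0 then (α - 1) * β / (α * β - 1)
      else if (i : ℕ) = n - 1 then α * (β - 1) / (α * β - 1)
      else (α - 1) * (β - 1) / (α * β - 1)) :
    ∀ i : Fin n, ∑ j, K i j * c j = 1 := by
  intro i
  have hα0 : (0:ℝ) < α := lt_trans one_pos hα
  have hβ0 : (0:ℝ) < β := lt_trans one_pos hβ
  have hd : α * β - 1 ≠ 0 := by nlinarith
  have hα1 : α - 1 ≠ 0 := sub_ne_zero.2 hα.ne'
  have hβ1 : β - 1 ≠ 0 := sub_ne_zero.2 hβ.ne'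
  have hαi1 : α⁻¹ - 1 ≠ 0 := sub_ne_zero.2 (by rw [Ne, inv_eq_one]; exact hα.ne')
  set m : ℝ := (α-1)*(β-1)/(α*β-1) with hm
  set a : ℝ := (α-1)/(α*β-1) with ha
  set b : ℝ := (β-1)/(α*β-1) with hb
  set Kf : ℕ → ℝ := fun j => if (i:ℕ) ≤ j then α ^ ((i:ℤ) - (j:ℤ)) else β ^ ((j:ℤ) - (i:ℤ))
    with hKf
  have hi : (i:ℕ) < n := i.isLt
  have key : ∑ j, K i j * c j =
      ∑ j ∈ Finset.range n,
        Kf j * (m + (if j = 0 then a else 0) + (if j = n-1 then b else 0)) := by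
    rw [← Fin.sum_univ_eq_sum_range
      (fun j => Kf j * (m + (if j = 0 then a else 0) + (if j = n-1 then b else 0)))]
    apply Finset.sum_congr rfl
    intro j _
    rw [hK, hc]
    congr 1
    split_ifs with h1 h2 h3 <;> first
      | omega
      | (simp only [hm, ha, hb]; field_simp; ring)
      | simp
  rw [key]
  -- split off the delta terms
  have step2 : ∑ j ∈ Finset.range n,
      Kf j * (m + (if j = 0 then a else 0) + (if j = n-1 then b else 0)) =
      (∑ j ∈ Finset.range n, Kf j) * m + Kf 0 * a + Kf (n-1) * b := by
    have h0 : (0:ℕ) ∈ Finset.range n := Finset.mem_range.2 (by omega)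
    have h1 : n - 1 ∈ Finset.range n := Finset.mem_range.2 (by omega)
    simp only [mul_add, Finset.sum_add_distrib, mul_ite, mul_zero]
    rw [Finset.sum_ite_eq' (Finset.range n) 0 (fun j => Kf j * a),
        Finset.sum_ite_eq' (Finset.range n) (n-1) (fun j => Kf j * b),
        if_pos h0, if_pos h1, ← Finset.sum_mul]
  rw [step2]
  set P : ℝ := α ^ (n - 1 - (i:ℕ)) with hP
  set Q : ℝ := β ^ (i:ℕ) with hQ
  have hPne : P ≠ 0 := pow_ne_zero _ hα0.ne'
  have hQne : Q ≠ 0 := pow_ne_zero _ hβ0.ne'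
  have hK0 : Kf 0 = Q⁻¹ := by
    rcases Nat.eq_zero_or_pos (i:ℕ) with h | h
    · simp [hKf, h, hQ]
    · rw [hKf]
      simp only [if_neg (by omega : ¬ (i:ℕ) ≤ 0)]
      rw [hQ]
      rw [show ((0:ℕ):ℤ) - (i:ℤ) = -((i:ℕ):ℤ) by push_cast; ring]
      rw [zpow_neg, zpow_natCast]
  have hKn : Kf (n-1) = P⁻¹ := by
    rw [hKf]
    simp only [if_pos (by omega : (i:ℕ) ≤ n - 1)]
    rw [hP, show ((i:ℕ):ℤ) - ((n-1:ℕ):ℤ) = -((n - 1 - (i:ℕ) : ℕ):ℤ) by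
      push_cast [Nat.cast_sub (by omega : 1 ≤ n), Nat.cast_sub (by omega : (i:ℕ) ≤ n - 1)]
      ring]
    rw [zpow_neg, zpow_natCast]
  have hgeo : ((α⁻¹) ^ (n - (i:ℕ)) - 1) / (α⁻¹ - 1) = (α - P⁻¹) / (α - 1) := by
    rw [show n - (i:ℕ) = (n - 1 - (i:ℕ)) + 1 by omega, pow_succ, inv_pow, ← hP]
    rw [div_eq_div_iff hαi1 hα1]
    field_simp
    ring
  have hsum : ∑ j ∈ Finset.range n, Kf j =
      (Q - 1) / (β - 1) * Q⁻¹ + (α - P⁻¹) / (α - 1) := by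
    rw [Finset.range_eq_Ico, ← Finset.sum_Ico_consecutive _ (Nat.zero_le (i:ℕ)) hi.le]
    congr 1
    · rw [← Finset.range_eq_Ico]
      have : ∀ j ∈ Finset.range (i:ℕ), Kf j = β ^ j * Q⁻¹ := by
        intro j hj
        rw [Finset.mem_range] at hj
        rw [hKf]
        simp only [if_neg (by omega : ¬ (i:ℕ) ≤ j)]
        rw [zpow_sub₀ hβ0.ne', zpow_natCast, zpow_natCast, hQ, div_eq_mul_inv]
      rw [Finset.sum_congr rfl this, ← Finset.sum_mul, geom_sum_eq hβ.ne', hQ]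
    · rw [Finset.sum_Ico_eq_sum_range]
      have : ∀ k ∈ Finset.range (n - (i:ℕ)), Kf ((i:ℕ) + k) = (α⁻¹) ^ k := by
        intro k hk
        rw [hKf]
        simp only [if_pos (by omega : (i:ℕ) ≤ (i:ℕ) + k)]
        rw [show ((i:ℕ):ℤ) - (((i:ℕ) + k : ℕ):ℤ) = -(k:ℤ) by push_cast; ring]
        rw [zpow_neg, zpow_natCast, inv_pow]
      rw [Finset.sum_congr rfl this, geom_sum_eq (by rw [Ne, inv_eq_one]; exact hα.ne'), hgeo]
  rw [hsum, hK0, hKn, hm, ha, hb]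
  field_simp
  rw [div_eq_iff (by nlinarith)]
  ring
end

section
/- For the balanced strategy with weights b*_1 = α(β-1)/D, b*_n = (α-1)β/D, b*_i = (α-1)(β-1)/D for 1 < i < n (D = nαβ-(n-1)(α+β)+(n-2)), and for every downturn sequence e_j (with entries α^i for i ≤ j and α^j β^(j-i) for i > j), the ratio α^j / (∑_{i=1}^n b*_i (e_j)_i) equals r = D/(αβ-1), independent of j. -/
theorem balanced_equalizes (n : ℕ) (hn : 2 ≤ n) (α β : ℝ) (hα : 1 < α) (hβ : 1 < β)
    (D : ℝ) (hD : D = n * (α * β) - (n - 1) * (α + β) + (n - 2))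
    (b : ℕ → ℝ)
    (hb : ∀ i ∈ Finset.Icc 1 n, b i =
      if i = 1 then α * (β - 1) / D
      else if i = n then (α - 1) * β / D
      else (α - 1) * (β - 1) / D)
    (d : ℕ → ℕ → ℝ)
    (hd : ∀ j i, d j i = if i ≤ j then α ^ i else α ^ j / β ^ (i - j)) :
    ∀ j ∈ Finset.Icc 1 n,
      α ^ j / (∑ i ∈ Finset.Icc 1 n, b i * d j i) = D / (α * β - 1) := by
  intro j hj
  rw [Finset.mem_Icc] at hj
  obtain ⟨hj1, hjn⟩ := hj
  have hn2 : (2:ℝ) ≤ (n:ℝ) := by exact_mod_cast hn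
  have hα0 : (0:ℝ) < α := by linarith
  have hβ0 : (0:ℝ) < β := by linarith
  have hαne1 : α ≠ 1 := ne_of_gt hα
  have hβne1 : β ≠ 1 := ne_of_gt hβ
  have hβne0 : β ≠ 0 := ne_of_gt hβ0
  have hα1 : α - 1 ≠ 0 := by intro h; apply hαne1; linarith
  have hβ1 : β - 1 ≠ 0 := by intro h; apply hβne1; linarith
  have hβinv1 : β⁻¹ ≠ 1 := by
    intro h
    have : β = 1 := by field_simp at h; linarith
    exact hβne1 this
  have h1β : (1:ℝ) - β ≠ 0 := by intro h; apply hβne1; linarith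
  have hD0 : 0 < D := by
    rw [hD]
    nlinarith [mul_nonneg (by positivity : (0:ℝ) ≤ (n:ℝ))
      (mul_nonneg (by linarith : (0:ℝ) ≤ α - 1) (by linarith : (0:ℝ) ≤ β - 1))]
  have hDne : D ≠ 0 := ne_of_gt hD0
  have hQne : β ^ (n - j) ≠ 0 := pow_ne_zero _ hβne0
  have hPne : α ^ j ≠ 0 := pow_ne_zero _ (ne_of_gt hα0)
  have hab1 : α * β - 1 ≠ 0 := by nlinarith
  -- value of d at the two endpoints
  have hd1 : d j 1 = α := by
    rw [hd, if_pos hj1, pow_one]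
  have hdn : d j n = α ^ j / β ^ (n - j) := by
    rw [hd]
    split_ifs with h
    · have hjn' : j = n := le_antisymm hjn h
      subst hjn'
      simp
    · rfl
  -- the total sum of d over the interval
  have hT : ∑ i ∈ Finset.Icc 1 n, d j i =
      (α ^ (j + 1) - α) / (α - 1)
        + α ^ j * (β ^ (n - j) - 1) / (β ^ (n - j) * (β - 1)) := by
    rw [show Finset.Icc 1 n = Finset.Ico 1 (n + 1) from (Finset.Ico_add_one_right_eq_Icc 1 n).symm]
    rw [← Finset.sum_Ico_consecutive _ (by omega : 1 ≤ j + 1) (by omega : j + 1 ≤ n + 1)]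
    have h1 : ∑ i ∈ Finset.Ico 1 (j + 1), d j i = (α ^ (j + 1) - α) / (α - 1) := by
      rw [Finset.sum_congr rfl (fun i hi => ?_)]
      · rw [geom_sum_Ico hαne1 (by omega), pow_one]
      · rw [Finset.mem_Ico] at hi
        rw [hd, if_pos (by omega)]
    have h2 : ∑ i ∈ Finset.Ico (j + 1) (n + 1), d j i =
        α ^ j * (β ^ (n - j) - 1) / (β ^ (n - j) * (β - 1)) := by
      rw [Finset.sum_Ico_eq_sum_range]
      have hcongr : ∀ k ∈ Finset.range (n + 1 - (j + 1)), d j (j + 1 + k) =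
          (α ^ j * β⁻¹) * (β⁻¹) ^ k := by
        intro k _
        rw [hd, if_neg (by omega)]
        have he : j + 1 + k - j = k + 1 := by omega
        rw [he, pow_succ]
        field_simp
        ring_nf
        rw [← mul_pow, mul_inv_cancel₀ hβne0, one_pow]
      rw [Finset.sum_congr rfl hcongr, ← Finset.mul_sum, geom_sum_eq hβinv1,
        show n + 1 - (j + 1) = n - j from by omega, inv_pow,
        show β⁻¹ - 1 = (1 - β) / β from by field_simp]
      rw [div_div_eq_mul_div]
      field_simp
      ring
    rw [h1, h2]
  -- closed form for the weighted sum
  have hsum : ∑ i ∈ Finset.Icc 1 n, b i * d j i = α ^ j * (α * β - 1) / D := by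
    have hstep : ∀ i ∈ Finset.Icc 1 n, b i * d j i =
        (α - 1) * (β - 1) / D * d j i
        + (if i = 1 then (β - 1) / D * d j 1 else 0)
        + (if i = n then (α - 1) / D * d j n else 0) := by
      intro i hi
      rw [hb i hi]
      rw [Finset.mem_Icc] at hi
      by_cases h1 : i = 1
      · subst h1
        have hne : (1:ℕ) ≠ n := by omega
        simp [hne]
        ring
      · by_cases h2 : i = n
        · subst h2
          simp [h1]
          ring
        · simp [h1, h2]
    rw [Finset.sum_congr rfl hstep]
    rw [Finset.sum_add_distrib, Finset.sum_add_distrib, ← Finset.mul_sum]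
    rw [Finset.sum_ite_eq' (Finset.Icc 1 n) 1 (fun _ => (β - 1) / D * d j 1)]
    rw [Finset.sum_ite_eq' (Finset.Icc 1 n) n (fun _ => (α - 1) / D * d j n)]
    rw [if_pos (Finset.mem_Icc.mpr ⟨le_refl 1, by omega⟩),
      if_pos (Finset.mem_Icc.mpr ⟨by omega, le_refl n⟩)]
    rw [hT, hd1, hdn]
    field_simp
    ring
  rw [hsum]
  field_simp
end

section
/- For any probability vector f ∈ ℝⁿ (f_i ≥ 0, ∑ f_i = 1), the worst-case ratio over downturns max_{1≤j≤n} α^j / (∑_{i=1}^n f_i (e_j)_i) is at least r = (nαβ - (n-1)(α+β) + (n-2))/(αβ-1), where (e_j)_i = α^i for i ≤ j and α^j β^(j-i) for i > j. -/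
open Finset

private noncomputable def wfun (n : ℕ) (α β : ℝ) (j : ℕ) : ℝ :=
  if j = 1 then β / (β - 1) else if j = n then α / (α - 1) else 1

private lemma wfun_pos (n : ℕ) {α β : ℝ} (hα : 1 < α) (hβ : 1 < β) (j : ℕ) :
    0 < wfun n α β j := by
  unfold wfun
  split_ifs
  · exact div_pos (by linarith) (by linarith)
  · exact div_pos (by linarith) (by linarith)
  · exact one_pos

private lemma Lsum (n : ℕ) (α β : ℝ) (hβ : 1 < β) :
    ∀ i, 2 ≤ i → i ≤ n →
      ∑ j ∈ Ioc 0 (i - 1), wfun n α β j / β ^ (i - j) = 1 / (β - 1) := by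
  have hβ0 : β ≠ 0 := by linarith
  have hβ1 : β - 1 ≠ 0 := by intro h; linarith [h]
  intro i h2
  induction i, h2 using Nat.le_induction with
  | base =>
    intro _
    have h01 : Ioc 0 (2 - 1) = ({1} : Finset ℕ) := by decide
    rw [h01, Finset.sum_singleton]
    have hw1 : wfun n α β 1 = β / (β - 1) := by unfold wfun; rw [if_pos rfl]
    rw [hw1]
    rw [show (2 : ℕ) - 1 = 1 from rfl, pow_one]
    field_simp
  | succ i h2 ih =>
    intro hin
    have hwi : wfun n α β i = 1 := by
      unfold wfun; rw [if_neg (by omega), if_neg (by omega)]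
    rw [show i + 1 - 1 = (i - 1) + 1 by omega]
    rw [Finset.sum_Ioc_succ_top (by omega)]
    rw [show i - 1 + 1 = i by omega]
    have hinner : ∑ j ∈ Ioc 0 (i - 1), wfun n α β j / β ^ (i + 1 - j)
        = (∑ j ∈ Ioc 0 (i - 1), wfun n α β j / β ^ (i - j)) / β := by
      rw [Finset.sum_div]
      refine Finset.sum_congr rfl fun j hj => ?_
      have hj' := (Finset.mem_Ioc.mp hj).2
      rw [show i + 1 - j = (i - j) + 1 by omega, pow_succ, div_div]
    rw [hinner, ih (by omega), hwi]
    rw [show i + 1 - i = 1 by omega, pow_one]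
    field_simp
    ring

private lemma Usum (n : ℕ) (hn : 2 ≤ n) (α β : ℝ) (hα : 1 < α) :
    ∀ k, k ≤ n - 2 →
      ∑ j ∈ Icc (n - k) n, wfun n α β j * α ^ (n - k) / α ^ j = α / (α - 1) := by
  have hα0 : (0:ℝ) < α := by linarith
  have hα1 : α - 1 ≠ 0 := by intro h; linarith [h]
  intro k
  induction k with
  | zero =>
    intro _
    rw [Nat.sub_zero, Finset.Icc_self, Finset.sum_singleton]
    have hwn : wfun n α β n = α / (α - 1) := by
      unfold wfun; rw [if_neg (by omega), if_pos rfl]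
    rw [hwn, mul_div_assoc, div_self (pow_ne_zero _ (by linarith)), mul_one]
  | succ k ih =>
    intro hk
    have h1 : n - (k + 1) + 1 = n - k := by omega
    rw [Finset.Icc_eq_cons_Ioc (by omega), Finset.sum_cons]
    have hIoc : Ioc (n - (k + 1)) n = Icc (n - k) n := by
      rw [← Finset.Icc_add_one_left_eq_Ioc]; congr 1
    rw [hIoc]
    have hw : wfun n α β (n - (k + 1)) = 1 := by
      unfold wfun; rw [if_neg (by omega), if_neg (by omega)]
    have hrest : ∑ j ∈ Icc (n - k) n, wfun n α β j * α ^ (n - (k + 1)) / α ^ j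
        = (∑ j ∈ Icc (n - k) n, wfun n α β j * α ^ (n - k) / α ^ j) / α := by
      rw [Finset.sum_div]
      refine Finset.sum_congr rfl fun j hj => ?_
      rw [show n - k = (n - (k + 1)) + 1 by omega, pow_succ]
      have hαj : (α : ℝ) ^ j ≠ 0 := pow_ne_zero _ (by linarith)
      field_simp
    rw [hw, hrest, ih (by omega), one_mul,
      div_self (pow_ne_zero _ (by linarith))]
    field_simp
    ring

private lemma Csum (n : ℕ) (hn : 2 ≤ n) (α β : ℝ) (hα : 1 < α) (hβ : 1 < β)
    (d : ℕ → ℕ → ℝ)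
    (hd : ∀ j i, d j i = if i ≤ j then α ^ i else α ^ j / β ^ (i - j))
    (i : ℕ) (hi1 : 1 ≤ i) (hin : i ≤ n) :
    ∑ j ∈ Icc 1 n, wfun n α β j * (d j i / α ^ j)
      = α / (α - 1) + 1 / (β - 1) := by
  have hα0 : (0:ℝ) < α := by linarith
  have hα1 : α - 1 ≠ 0 := by intro h; linarith [h]
  have hβ1 : β - 1 ≠ 0 := by intro h; linarith [h]
  rcases eq_or_lt_of_le hi1 with h1 | h2
  · -- i = 1
    subst h1
    have hU := Usum n hn α β hα (n - 2) le_rfl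
    rw [show n - (n - 2) = 2 by omega] at hU
    rw [Finset.Icc_eq_cons_Ioc (show 1 ≤ n by omega), Finset.sum_cons]
    have hIoc : Ioc 1 n = Icc 2 n := (Finset.Icc_add_one_left_eq_Ioc 1 n).symm
    rw [hIoc]
    have hw1 : wfun n α β 1 = β / (β - 1) := by unfold wfun; rw [if_pos rfl]
    have hd11 : d 1 1 = α := by rw [hd, if_pos le_rfl, pow_one]
    have hrest : ∑ j ∈ Icc 2 n, wfun n α β j * (d j 1 / α ^ j)
        = (∑ j ∈ Icc 2 n, wfun n α β j * α ^ 2 / α ^ j) / α := by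
      rw [Finset.sum_div]
      refine Finset.sum_congr rfl fun j hj => ?_
      have hj2 := (Finset.mem_Icc.mp hj).1
      rw [hd, if_pos (by omega), pow_one]
      have hαj : (α : ℝ) ^ j ≠ 0 := pow_ne_zero _ (by linarith)
      field_simp
    rw [hrest, hU, hw1, hd11, pow_one,
      div_self (show (α:ℝ) ≠ 0 by linarith), mul_one]
    field_simp
    ring
  · -- 2 ≤ i
    have h2' : 2 ≤ i := h2
    have hsplit := Finset.sum_Ioc_consecutive
      (f := fun j => wfun n α β j * (d j i / α ^ j))
      (Nat.zero_le (i - 1)) (show i - 1 ≤ n by omega)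
    rw [show Icc 1 n = Ioc 0 n from Finset.Icc_add_one_left_eq_Ioc 0 n, ← hsplit]
    have hL : ∑ j ∈ Ioc 0 (i - 1), wfun n α β j * (d j i / α ^ j)
        = 1 / (β - 1) := by
      rw [← Lsum n α β hβ i h2' hin]
      refine Finset.sum_congr rfl fun j hj => ?_
      have hj' := Finset.mem_Ioc.mp hj
      rw [hd, if_neg (by omega), div_right_comm,
        div_self (pow_ne_zero _ (show (α:ℝ) ≠ 0 by linarith)), mul_one_div]
    have hUoc : Ioc (i - 1) n = Icc i n := by
      rw [← Finset.Icc_add_one_left_eq_Ioc]; congr 1; omega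
    have hU : ∑ j ∈ Ioc (i - 1) n, wfun n α β j * (d j i / α ^ j)
        = α / (α - 1) := by
      rw [hUoc]
      have hUs := Usum n hn α β hα (n - i) (by omega)
      rw [show n - (n - i) = i by omega] at hUs
      rw [← hUs]
      refine Finset.sum_congr rfl fun j hj => ?_
      have hj' := (Finset.mem_Icc.mp hj).1
      rw [hd, if_pos hj', mul_div_assoc]
    rw [hL, hU]
    ring

private lemma Wsum (n : ℕ) (hn : 2 ≤ n) (α β : ℝ) :
    ∑ j ∈ Icc 1 n, wfun n α β j = ((n : ℝ) - 2) + β / (β - 1) + α / (α - 1) := by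
  rw [Finset.Icc_eq_cons_Ioc (show 1 ≤ n by omega), Finset.sum_cons]
  have hIoc : Ioc 1 n = Icc 2 n := (Finset.Icc_add_one_left_eq_Ioc 1 n).symm
  rw [hIoc]
  have hmem : n ∈ Icc 2 n := Finset.mem_Icc.mpr ⟨hn, le_rfl⟩
  rw [Finset.sum_eq_sum_sdiff_singleton_add hmem]
  have hdiff : Icc 2 n \ {n} = Icc 2 (n - 1) := by
    ext x
    simp only [Finset.mem_sdiff, Finset.mem_Icc, Finset.mem_singleton]
    omega
  rw [hdiff]
  have hw1 : wfun n α β 1 = β / (β - 1) := by unfold wfun; rw [if_pos rfl]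
  have hwn : wfun n α β n = α / (α - 1) := by
    unfold wfun; rw [if_neg (by omega), if_pos rfl]
  have hint : ∑ j ∈ Icc 2 (n - 1), wfun n α β j = ((n : ℝ) - 2) := by
    rw [Finset.sum_congr rfl (fun j hj => by
      have hj' := Finset.mem_Icc.mp hj
      show wfun n α β j = 1
      unfold wfun; rw [if_neg (by omega), if_neg (by omega)])]
    rw [Finset.sum_const, Nat.card_Icc, nsmul_eq_mul, mul_one,
      show n - 1 + 1 - 2 = n - 2 by omega, Nat.cast_sub hn]
    norm_num
  rw [hw1, hwn, hint]
  ring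

theorem minimax_lower_bound (n : ℕ) (hn : 2 ≤ n) (α β : ℝ) (hα : 1 < α) (hβ : 1 < β)
    (f : ℕ → ℝ) (hf0 : ∀ i ∈ Finset.Icc 1 n, 0 ≤ f i)
    (hf1 : ∑ i ∈ Finset.Icc 1 n, f i = 1)
    (d : ℕ → ℕ → ℝ)
    (hd : ∀ j i, d j i = if i ≤ j then α ^ i else α ^ j / β ^ (i - j)) :
    ∃ j ∈ Finset.Icc 1 n,
      (n * (α * β) - (n - 1) * (α + β) + (n - 2)) / (α * β - 1) ≤
        α ^ j / ∑ i ∈ Finset.Icc 1 n, f i * d j i := by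
  by_contra hcon
  push_neg at hcon
  have hα0 : (0:ℝ) < α := by linarith
  have hβ0 : (0:ℝ) < β := by linarith
  have hα1 : α - 1 ≠ 0 := by intro h; linarith [h]
  have hβ1 : β - 1 ≠ 0 := by intro h; linarith [h]
  have hαβ : α * β - 1 ≠ 0 := by nlinarith
  have hdpos : ∀ j i, 0 < d j i := by
    intro j i
    rw [hd]
    split_ifs <;> positivity
  have hex : ∃ i ∈ Icc 1 n, 0 < f i := by
    by_contra hc
    push_neg at hc
    have h0 : ∑ i ∈ Icc 1 n, f i ≤ 0 := Finset.sum_nonpos hc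
    linarith
  have hS : ∀ j, 0 < ∑ i ∈ Icc 1 n, f i * d j i := by
    intro j
    obtain ⟨i0, hi0, hfi0⟩ := hex
    exact Finset.sum_pos' (fun i hi => mul_nonneg (hf0 i hi) (hdpos j i).le)
      ⟨i0, hi0, mul_pos hfi0 (hdpos j i0)⟩
  have hne : (Icc 1 n).Nonempty := ⟨1, Finset.mem_Icc.mpr ⟨le_rfl, by omega⟩⟩
  set R : ℝ := ((n : ℝ) * (α * β) - ((n : ℝ) - 1) * (α + β) + ((n : ℝ) - 2)) / (α * β - 1)
    with hRdef
  have hcon' : ∀ j ∈ Icc 1 n, α ^ j / ∑ i ∈ Icc 1 n, f i * d j i < R := hcon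
  have key : ∑ j ∈ Icc 1 n, wfun n α β j
      < ∑ j ∈ Icc 1 n,
          wfun n α β j * (R * (∑ i ∈ Icc 1 n, f i * d j i)) / α ^ j := by
    refine Finset.sum_lt_sum_of_nonempty hne fun j hj => ?_
    have hSj := hS j
    have h1 : α ^ j < R * ∑ i ∈ Icc 1 n, f i * d j i := by
      have := hcon' j hj
      rwa [div_lt_iff₀ hSj] at this
    have hwj := wfun_pos n hα hβ j
    rw [lt_div_iff₀ (pow_pos hα0 j)]
    exact (mul_lt_mul_iff_right₀ hwj).mpr h1
  have swap : ∑ j ∈ Icc 1 n,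
        wfun n α β j * (R * (∑ i ∈ Icc 1 n, f i * d j i)) / α ^ j
      = R * (α / (α - 1) + 1 / (β - 1)) := by
    have step1 : ∀ j ∈ Icc 1 n,
        wfun n α β j * (R * (∑ i ∈ Icc 1 n, f i * d j i)) / α ^ j
        = ∑ i ∈ Icc 1 n, R * (f i * (wfun n α β j * (d j i / α ^ j))) := by
      intro j hj
      have h1 : wfun n α β j * (R * (∑ i ∈ Icc 1 n, f i * d j i)) / α ^ j
          = ∑ i ∈ Icc 1 n, (R * wfun n α β j / α ^ j) * (f i * d j i) := by
        rw [← Finset.mul_sum]; ring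
      rw [h1]
      exact Finset.sum_congr rfl fun i _ => by ring
    rw [Finset.sum_congr rfl step1, Finset.sum_comm]
    have step2 : ∀ i ∈ Icc 1 n,
        ∑ j ∈ Icc 1 n, R * (f i * (wfun n α β j * (d j i / α ^ j)))
        = (f i) * (R * (α / (α - 1) + 1 / (β - 1))) := by
      intro i hi
      have hi' := Finset.mem_Icc.mp hi
      calc ∑ j ∈ Icc 1 n, R * (f i * (wfun n α β j * (d j i / α ^ j)))
          = (R * f i) * ∑ j ∈ Icc 1 n, wfun n α β j * (d j i / α ^ j) := by
            rw [Finset.mul_sum]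
            exact Finset.sum_congr rfl fun j _ => by ring
        _ = (R * f i) * (α / (α - 1) + 1 / (β - 1)) := by
            rw [Csum n hn α β hα hβ d hd i hi'.1 hi'.2]
        _ = (f i) * (R * (α / (α - 1) + 1 / (β - 1))) := by ring
    rw [Finset.sum_congr rfl step2, ← Finset.sum_mul, hf1, one_mul]
  have eqW : ∑ j ∈ Icc 1 n, wfun n α β j
      = R * (α / (α - 1) + 1 / (β - 1)) := by
    rw [Wsum n hn α β, hRdef, div_mul_eq_mul_div, eq_div_iff hαβ]
    field_simp
    ring
  rw [swap, ← eqW] at key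
  exact lt_irrefl _ key
end

section
/- If a probability vector f ∈ ℝⁿ satisfies max_{1≤j≤n} α^j / (∑_{i=1}^n f_i (e_j)_i) = r with r = (nαβ-(n-1)(α+β)+(n-2))/(αβ-1), then f equals the balanced strategy weights b* (b*_1 = α(β-1)/D, b*_n = (α-1)β/D, b*_i = (α-1)(β-1)/D otherwise, D = nαβ-(n-1)(α+β)+(n-2)). -/
open Finset

noncomputable def ee (n : ℕ) (α β : ℝ) (j : ℕ) : ℝ :=
  if j = 1 then (α-1)*β else if j = n then α*(β-1) else (α-1)*(β-1)

lemma ee_pos (n : ℕ) (α β : ℝ) (hα : 1 < α) (hβ : 1 < β) (j : ℕ) : 0 < ee n α β j := by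
  unfold ee; split_ifs <;> nlinarith

lemma ee_eq_of_lt (n : ℕ) (α β : ℝ) {j : ℕ} (h : j < n) :
    ee n α β j = if j = 1 then (α-1)*β else (α-1)*(β-1) := by
  rcases eq_or_ne j 1 with h1 | h1 <;> simp [ee, h1, Nat.ne_of_lt h]

lemma geom_beta (α β : ℝ) : ∀ m : ℕ, 1 ≤ m →
    ∑ j ∈ Finset.Icc 1 m, (if j = 1 then (α-1)*β else (α-1)*(β-1)) * β^j
      = (α-1)*β^(m+1) := by
  intro m hm
  induction m, hm using Nat.le_induction with
  | base => rw [Finset.Icc_self, Finset.sum_singleton, if_pos rfl]; ring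
  | succ m hm ih =>
      rw [Finset.sum_Icc_succ_top (by omega), ih, if_neg (by omega)]; ring

lemma geom_alpha (α β : ℝ) (hα : α ≠ 0) : ∀ m : ℕ, 1 ≤ m →
    ∑ j ∈ Finset.Icc 1 m, (if j = 1 then (α-1)*β else (α-1)*(β-1)) / α^j
      = (α*β-1)/α - (β-1)/α^m := by
  intro m hm
  induction m, hm using Nat.le_induction with
  | base => rw [Finset.Icc_self, Finset.sum_singleton, if_pos rfl, pow_one]
            field_simp; ring
  | succ m hm ih =>
      rw [Finset.sum_Icc_succ_top (by omega), ih, if_neg (by omega)]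
      have hp : (α:ℝ)^m ≠ 0 := pow_ne_zero _ hα
      field_simp
      ring

lemma sum_const_ite (c1 cm : ℝ) : ∀ m : ℕ, 1 ≤ m →
    ∑ j ∈ Finset.Icc 1 m, (if j = 1 then c1 else cm) = c1 + ((m:ℝ)-1)*cm := by
  intro m hm
  induction m, hm using Nat.le_induction with
  | base => rw [Finset.Icc_self, Finset.sum_singleton, if_pos rfl]; norm_num
  | succ m hm ih =>
      rw [Finset.sum_Icc_succ_top (by omega), ih, if_neg (by omega)]
      push_cast; ring

lemma sum_ee_alpha (n : ℕ) (hn : 2 ≤ n) (α β : ℝ) (hα : α ≠ 0) :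
    ∑ j ∈ Finset.Icc 1 n, ee n α β j / α^j = (α*β-1)/α := by
  obtain ⟨m, rfl⟩ : ∃ m, n = m + 1 := ⟨n-1, by omega⟩
  rw [Finset.sum_Icc_succ_top (by omega)]
  rw [Finset.sum_congr rfl (fun j hj => by
    rw [ee_eq_of_lt (m+1) α β (by simp at hj; omega)] )]
  rw [geom_alpha α β hα m (by omega)]
  have he : ee (m+1) α β (m+1) = α*(β-1) := by
    unfold ee; rw [if_neg (by omega), if_pos rfl]
  rw [he]
  have hp : (α:ℝ)^m ≠ 0 := pow_ne_zero _ hα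
  field_simp
  ring

lemma sum_ee_head (n : ℕ) (α β : ℝ) (hα : α ≠ 0) (k : ℕ) (hk : 1 ≤ k) (hkn : k < n) :
    ∑ j ∈ Finset.Icc 1 k, ee n α β j / α^j = (α*β-1)/α - (β-1)/α^k := by
  rw [Finset.sum_congr rfl (fun j hj => by
    rw [ee_eq_of_lt n α β (by simp at hj; omega)] )]
  exact geom_alpha α β hα k hk

lemma sum_ee_tail (n : ℕ) (hn : 2 ≤ n) (α β : ℝ) (hα : α ≠ 0)
    (k : ℕ) (hk : 1 ≤ k) (hkn : k + 1 ≤ n) :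
    ∑ j ∈ Finset.Icc (k+1) n, ee n α β j / α^j = (β-1)/α^k := by
  have hsplit : (∑ j ∈ Finset.Icc 1 k, ee n α β j / α^j)
      + ∑ j ∈ Finset.Icc (k+1) n, ee n α β j / α^j
      = ∑ j ∈ Finset.Icc 1 n, ee n α β j / α^j := by
    simp only [← Finset.Ico_add_one_right_eq_Icc]
    exact Finset.sum_Ico_consecutive _ (by omega) (by omega)
  rw [sum_ee_head n α β hα k hk (by omega), sum_ee_alpha n hn α β hα] at hsplit
  linarith

lemma sum_beta_head (n : ℕ) (α β : ℝ) (k : ℕ) (hk : 1 ≤ k) (hkn : k < n) :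
    ∑ j ∈ Finset.Icc 1 k, ee n α β j * β^j = (α-1)*β^(k+1) := by
  rw [Finset.sum_congr rfl (fun j hj => by
    rw [ee_eq_of_lt n α β (by simp at hj; omega)] )]
  exact geom_beta α β k hk

lemma sum_ee_total (n : ℕ) (hn : 2 ≤ n) (α β : ℝ) :
    ∑ j ∈ Finset.Icc 1 n, ee n α β j
      = (n:ℝ) * (α*β) - ((n:ℝ)-1)*(α+β) + ((n:ℝ)-2) := by
  obtain ⟨m, rfl⟩ : ∃ m, n = m + 1 := ⟨n-1, by omega⟩
  rw [Finset.sum_Icc_succ_top (by omega)]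
  rw [Finset.sum_congr rfl (fun j hj => by
    rw [ee_eq_of_lt (m+1) α β (by simp at hj; omega)] )]
  rw [sum_const_ite _ _ m (by omega)]
  have he : ee (m+1) α β (m+1) = α*(β-1) := by
    unfold ee; rw [if_neg (by omega), if_pos rfl]
  rw [he]
  push_cast
  ring

lemma colsum (n : ℕ) (hn : 2 ≤ n) (α β : ℝ) (hα : 1 < α) (hβ : 1 < β)
    (d : ℕ → ℕ → ℝ) (hd : ∀ j i, d j i = if i ≤ j then α ^ i else α ^ j / β ^ (i - j))
    (i : ℕ) (hi1 : 1 ≤ i) (hin : i ≤ n) :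
    ∑ j ∈ Finset.Icc 1 n, ee n α β j / α^j * d j i = α*β - 1 := by
  have hα0 : (0:ℝ) < α := by linarith
  have hα0' : α ≠ 0 := ne_of_gt hα0
  have hβ0 : (0:ℝ) < β := by linarith
  have hβ0' : β ≠ 0 := ne_of_gt hβ0
  rcases eq_or_lt_of_le hi1 with h1 | h1
  · -- i = 1
    subst h1
    have : ∀ j ∈ Finset.Icc 1 n, ee n α β j / α^j * d j 1 = ee n α β j / α^j * α := by
      intro j hj
      rw [hd, if_pos (Finset.mem_Icc.1 hj).1, pow_one]
    rw [Finset.sum_congr rfl this, ← Finset.sum_mul, sum_ee_alpha n hn α β hα0']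
    field_simp
  · -- 2 ≤ i
    obtain ⟨k, rfl⟩ : ∃ k, i = k + 1 := ⟨i-1, by omega⟩
    have hk1 : 1 ≤ k := by omega
    have hsplit : (∑ j ∈ Finset.Icc 1 k, ee n α β j / α^j * d j (k+1))
        + ∑ j ∈ Finset.Icc (k+1) n, ee n α β j / α^j * d j (k+1)
        = ∑ j ∈ Finset.Icc 1 n, ee n α β j / α^j * d j (k+1) := by
      simp only [← Finset.Ico_add_one_right_eq_Icc]
      exact Finset.sum_Ico_consecutive _ (by omega) (by omega)
    have hfirst : ∑ j ∈ Finset.Icc 1 k, ee n α β j / α^j * d j (k+1) = α - 1 := by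
      have hterm : ∀ j ∈ Finset.Icc 1 k, ee n α β j / α^j * d j (k+1)
          = ee n α β j * β^j / β^(k+1) := by
        intro j hj
        rw [Finset.mem_Icc] at hj
        rw [hd, if_neg (by omega)]
        have h2 : β ^ (k+1-j) = β^(k+1) / β^j := by
          rw [eq_div_iff (pow_ne_zero _ hβ0'), ← pow_add]
          congr 1; omega
        rw [h2]
        have hpj : (α:ℝ)^j ≠ 0 := pow_ne_zero _ hα0'
        have hpbj : (β:ℝ)^j ≠ 0 := pow_ne_zero _ hβ0'
        have hpbk : (β:ℝ)^(k+1) ≠ 0 := pow_ne_zero _ hβ0'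
        field_simp
      rw [Finset.sum_congr rfl hterm, ← Finset.sum_div,
        sum_beta_head n α β k hk1 (by omega)]
      rw [pow_succ]
      have hpbk : (β:ℝ)^(k+1) ≠ 0 := pow_ne_zero _ hβ0'
      field_simp
    have hsecond : ∑ j ∈ Finset.Icc (k+1) n, ee n α β j / α^j * d j (k+1) = α*(β-1) := by
      have hterm : ∀ j ∈ Finset.Icc (k+1) n, ee n α β j / α^j * d j (k+1)
          = ee n α β j / α^j * α^(k+1) := by
        intro j hj
        rw [Finset.mem_Icc] at hj
        rw [hd, if_pos (by omega)]
      rw [Finset.sum_congr rfl hterm, ← Finset.sum_mul,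
        sum_ee_tail n hn α β hα0' k hk1 (by omega), pow_succ]
      have hpk : (α:ℝ)^k ≠ 0 := pow_ne_zero _ hα0'
      field_simp
    rw [hfirst, hsecond] at hsplit
    rw [← hsplit]
    ring

theorem optimal_static_unique (n : ℕ) (hn : 2 ≤ n) (α β : ℝ) (hα : 1 < α) (hβ : 1 < β)
    (D : ℝ) (hD : D = n * (α * β) - (n - 1) * (α + β) + (n - 2))
    (f : ℕ → ℝ) (hf0 : ∀ i ∈ Finset.Icc 1 n, 0 ≤ f i)
    (hf1 : ∑ i ∈ Finset.Icc 1 n, f i = 1)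
    (d : ℕ → ℕ → ℝ)
    (hd : ∀ j i, d j i = if i ≤ j then α ^ i else α ^ j / β ^ (i - j))
    (hle : ∀ j ∈ Finset.Icc 1 n,
      α ^ j / ∑ i ∈ Finset.Icc 1 n, f i * d j i ≤ D / (α * β - 1))
    (heq : ∃ j ∈ Finset.Icc 1 n,
      α ^ j / ∑ i ∈ Finset.Icc 1 n, f i * d j i = D / (α * β - 1)) :
    ∀ i ∈ Finset.Icc 1 n, f i =
      if i = 1 then α * (β - 1) / D
      else if i = n then (α - 1) * β / D
      else (α - 1) * (β - 1) / D := by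
  have hα0 : (0:ℝ) < α := by linarith
  have hα0' : α ≠ 0 := ne_of_gt hα0
  have hβ0 : (0:ℝ) < β := by linarith
  have hab : (1:ℝ) < α*β := by nlinarith
  have hab0 : (0:ℝ) < α*β - 1 := by linarith
  have hcast : (2:ℝ) ≤ (n:ℝ) := by exact_mod_cast hn
  have hDsum : ∑ j ∈ Finset.Icc 1 n, ee n α β j = D := by
    rw [hD]; exact sum_ee_total n hn α β
  have hDpos : 0 < D := by
    have key : D = ((n:ℝ)-2)*((α-1)*(β-1)) + ((α-1)*β + α*(β-1)) := by rw [hD]; ring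
    have h1 : (0:ℝ) ≤ ((n:ℝ)-2)*((α-1)*(β-1)) := by
      apply mul_nonneg (by linarith)
      apply mul_nonneg <;> linarith
    nlinarith
  have hD' : D ≠ 0 := ne_of_gt hDpos
  -- positivity of the payoff sums
  have hSpos : ∀ j ∈ Finset.Icc 1 n, 0 < ∑ i ∈ Finset.Icc 1 n, f i * d j i := by
    intro j hj
    have hdpos : ∀ i, 0 < d j i := by
      intro i; rw [hd]; split
      · positivity
      · positivity
    obtain ⟨i0, hi0, hfi0⟩ : ∃ i0 ∈ Finset.Icc 1 n, 0 < f i0 := by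
      by_contra h; push_neg at h
      have h0 : ∑ i ∈ Finset.Icc 1 n, f i = 0 :=
        Finset.sum_eq_zero (fun i hi => le_antisymm (h i hi) (hf0 i hi))
      rw [hf1] at h0; norm_num at h0
    have h1 : f i0 * d j i0 ≤ ∑ i ∈ Finset.Icc 1 n, f i * d j i :=
      Finset.single_le_sum (fun i hi => mul_nonneg (hf0 i hi) (hdpos i).le) hi0
    have h2 := mul_pos hfi0 (hdpos i0)
    linarith
  -- all payoff sums are exactly α^j (αβ-1)/D
  have hS : ∀ j ∈ Finset.Icc 1 n, ∑ i ∈ Finset.Icc 1 n, f i * d j i = α^j * (α*β-1) / D := by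
    have hge : ∀ j ∈ Finset.Icc 1 n,
        α^j * (α*β-1)/D ≤ ∑ i ∈ Finset.Icc 1 n, f i * d j i := by
      intro j hj
      have h := hle j hj
      have hp := hSpos j hj
      rw [div_le_div_iff₀ hp hab0] at h
      rw [div_le_iff₀ hDpos]
      linarith
    have e1 : ∑ j ∈ Finset.Icc 1 n,
        (ee n α β j / α^j) * (∑ i ∈ Finset.Icc 1 n, f i * d j i) = α*β - 1 := by
      calc ∑ j ∈ Finset.Icc 1 n, (ee n α β j / α^j) * ∑ i ∈ Finset.Icc 1 n, f i * d j i
          = ∑ j ∈ Finset.Icc 1 n, ∑ i ∈ Finset.Icc 1 n,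
              f i * (ee n α β j / α^j * d j i) := by
            refine Finset.sum_congr rfl (fun j hj => ?_)
            rw [Finset.mul_sum]
            exact Finset.sum_congr rfl (fun i hi => by ring)
        _ = ∑ i ∈ Finset.Icc 1 n, ∑ j ∈ Finset.Icc 1 n,
              f i * (ee n α β j / α^j * d j i) := Finset.sum_comm
        _ = ∑ i ∈ Finset.Icc 1 n, f i * (α*β-1) := by
            refine Finset.sum_congr rfl (fun i hi => ?_)
            rw [← Finset.mul_sum,
              colsum n hn α β hα hβ d hd i (Finset.mem_Icc.1 hi).1 (Finset.mem_Icc.1 hi).2]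
        _ = α*β - 1 := by rw [← Finset.sum_mul, hf1, one_mul]
    have e2 : ∑ j ∈ Finset.Icc 1 n,
        (ee n α β j / α^j) * (α^j*(α*β-1)/D) = α*β - 1 := by
      have hterm : ∀ j ∈ Finset.Icc 1 n,
          (ee n α β j / α^j) * (α^j*(α*β-1)/D) = ee n α β j * ((α*β-1)/D) := by
        intro j hj
        have hp : (α:ℝ)^j ≠ 0 := pow_ne_zero _ hα0'
        field_simp
      rw [Finset.sum_congr rfl hterm, ← Finset.sum_mul, hDsum]
      field_simp
    have hsum : ∑ j ∈ Finset.Icc 1 n,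
        (ee n α β j / α^j) * ((∑ i ∈ Finset.Icc 1 n, f i * d j i) - α^j*(α*β-1)/D) = 0 := by
      rw [Finset.sum_congr rfl
        (fun j _ => mul_sub (ee n α β j / α^j) _ (α^j*(α*β-1)/D)),
        Finset.sum_sub_distrib, e1, e2, sub_self]
    intro j hj
    have hnn : ∀ j ∈ Finset.Icc 1 n,
        0 ≤ (ee n α β j / α^j) * ((∑ i ∈ Finset.Icc 1 n, f i * d j i) - α^j*(α*β-1)/D) :=
      fun j hj => mul_nonneg
        (le_of_lt (div_pos (ee_pos n α β hα hβ j) (pow_pos hα0 j)))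
        (sub_nonneg.2 (hge j hj))
    have hz := (Finset.sum_eq_zero_iff_of_nonneg hnn).1 hsum j hj
    have hne : ee n α β j / α^j ≠ 0 :=
      ne_of_gt (div_pos (ee_pos n α β hα hβ j) (pow_pos hα0 j))
    rcases mul_eq_zero.1 hz with h | h
    · exact absurd h hne
    · have := sub_eq_zero.1 h; linarith
  -- telescoping : partial sums A j
  have hA : ∀ j, 1 ≤ j → j < n →
      ∑ i ∈ Finset.Icc 1 j, f i * α^i = α^(j+1)*(β-1)/D := by
    intro j hj1 hjn
    have hj_mem : j ∈ Finset.Icc 1 n := Finset.mem_Icc.2 ⟨hj1, by omega⟩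
    have hj1_mem : j+1 ∈ Finset.Icc 1 n := Finset.mem_Icc.2 ⟨by omega, by omega⟩
    have h1 := hS j hj_mem
    have h2 := hS (j+1) hj1_mem
    have key : (∑ i ∈ Finset.Icc 1 n, f i * d (j+1) i)
        - (α*β) * ∑ i ∈ Finset.Icc 1 n, f i * d j i
        = (1 - α*β) * ∑ i ∈ Finset.Icc 1 j, f i * α^i := by
      rw [Finset.mul_sum, ← Finset.sum_sub_distrib]
      have hpt : ∀ i ∈ Finset.Icc 1 n, f i * d (j+1) i - α*β*(f i * d j i)
          = f i * (if i ≤ j then (1-α*β)*α^i else 0) := by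
        intro i hi
        rw [hd, hd]
        rcases le_or_gt i j with h | h
        · rw [if_pos h, if_pos (by omega : i ≤ j+1), if_pos h]; ring
        · rw [if_neg (by omega : ¬ i ≤ j), if_neg (by omega : ¬ i ≤ j)]
          rcases eq_or_lt_of_le (Nat.succ_le_of_lt h) with he | hgt
          · rw [if_pos (by omega : i ≤ j+1)]
            have hij : i - j = 1 := by omega
            rw [hij, pow_one, ← he]
            field_simp
            simp only [Nat.succ_eq_add_one, pow_succ]; ring
          · rw [if_neg (by omega : ¬ i ≤ j+1)]
            have h3 : β^(i-j) = β^(i-(j+1)) * β := by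
              rw [← pow_succ]; congr 1; omega
            rw [h3, mul_zero]
            have hb1 : (β:ℝ)^(i-(j+1)) ≠ 0 := pow_ne_zero _ (by linarith)
            field_simp
            ring
      rw [Finset.sum_congr rfl hpt]
      have hsplit : (∑ i ∈ Finset.Icc 1 j, f i * (if i ≤ j then (1-α*β)*α^i else 0))
          + ∑ i ∈ Finset.Icc (j+1) n, f i * (if i ≤ j then (1-α*β)*α^i else 0)
          = ∑ i ∈ Finset.Icc 1 n, f i * (if i ≤ j then (1-α*β)*α^i else 0) := by
        simp only [← Finset.Ico_add_one_right_eq_Icc]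
        exact Finset.sum_Ico_consecutive _ (by omega) (by omega)
      rw [← hsplit]
      have hz2 : ∑ i ∈ Finset.Icc (j+1) n, f i * (if i ≤ j then (1-α*β)*α^i else 0) = 0 :=
        Finset.sum_eq_zero (fun i hi => by
          rw [if_neg (by rw [Finset.mem_Icc] at hi; omega), mul_zero])
      rw [hz2, add_zero, Finset.mul_sum]
      refine Finset.sum_congr rfl (fun i hi => ?_)
      rw [if_pos (Finset.mem_Icc.1 hi).2]
      ring
    rw [h1, h2] at key
    have h4 : (1 - α*β) ≠ 0 := by linarith
    have goal_eq : (1-α*β) * (α^(j+1)*(β-1)/D)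
        = α^(j+1)*(α*β-1)/D - α*β*(α^j*(α*β-1)/D) := by
      rw [pow_succ]
      field_simp
      ring
    exact mul_left_cancel₀ h4 (key.symm.trans goal_eq.symm)
  -- f 1
  have hf1' : f 1 = α*(β-1)/D := by
    have h := hA 1 le_rfl (by omega)
    rw [Finset.Icc_self, Finset.sum_singleton, pow_one] at h
    have h2 : f 1 * α = (α*(β-1)/D) * α := by
      rw [h]; rw [pow_succ, pow_one]; field_simp
    exact mul_right_cancel₀ hα0' h2
  -- middle f i
  have hfmid : ∀ i, 2 ≤ i → i < n → f i = (α-1)*(β-1)/D := by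
    intro i h2i hin
    obtain ⟨k, rfl⟩ : ∃ k, i = k + 1 := ⟨i-1, by omega⟩
    have hk1 : 1 ≤ k := by omega
    have hAk := hA k hk1 (by omega)
    have hAk1 := hA (k+1) (by omega) hin
    rw [Finset.sum_Icc_succ_top (by omega), hAk] at hAk1
    have hpow : (α:ℝ)^(k+1) ≠ 0 := pow_ne_zero _ hα0'
    have h5 : f (k+1) * α^(k+1) = ((α-1)*(β-1)/D) * α^(k+1) := by
      have e2 : (α:ℝ) ^ (k+1+1) = α * α^(k+1) := by ring
      rw [e2] at hAk1
      field_simp at hAk1 ⊢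
      linarith
    exact mul_right_cancel₀ hpow h5
  -- f n
  have hfn : f n = (α-1)*β/D := by
    have hn_mem : n ∈ Finset.Icc 1 n := Finset.mem_Icc.2 ⟨by omega, le_rfl⟩
    have h1 := hS n hn_mem
    have h2 : ∑ i ∈ Finset.Icc 1 n, f i * d n i = ∑ i ∈ Finset.Icc 1 n, f i * α^i := by
      refine Finset.sum_congr rfl (fun i hi => ?_)
      rw [hd, if_pos (Finset.mem_Icc.1 hi).2]
    rw [h2] at h1
    obtain ⟨m, rfl⟩ : ∃ m, n = m + 1 := ⟨n-1, by omega⟩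
    rw [Finset.sum_Icc_succ_top (by omega), hA m (by omega) (by omega)] at h1
    have hpow : (α:ℝ)^(m+1) ≠ 0 := pow_ne_zero _ hα0'
    have h5 : f (m+1) * α^(m+1) = ((α-1)*β/D) * α^(m+1) := by
      field_simp at h1 ⊢
      linarith
    exact mul_right_cancel₀ hpow h5
  -- conclusion
  intro i hi
  rw [Finset.mem_Icc] at hi
  by_cases h1 : i = 1
  · subst h1; rw [if_pos rfl]; exact hf1'
  · rw [if_neg h1]
    by_cases h2 : i = n
    · subst h2; rw [if_pos rfl]; exact hfn
    · rw [if_neg h2]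
      exact hfmid i (by omega) (by omega)
end

section
/- For n ≥ 2 and α, β > 1, the competitive ratio of the dollar averaging strategy (investing 1/n each day) over the downturn sequences equals max{ n(1-α⁻¹)/(1-α⁻ⁿ), n(1-β⁻¹)/(1-β⁻ⁿ) }. That is, max_{1≤j≤n} n/B_j = max{ n(1-α⁻¹)/(1-α⁻ⁿ), n(1-β⁻¹)/(1-β⁻ⁿ) }, where B_j = ∑_{i=1}^n K(i,j) with K(i,j) = α^(i-j) for i ≤ j and β^(j-i) for i > j. -/
open Finset

lemma aux_min_le (n j : ℕ) (hj1 : 1 ≤ j) (hjn : j ≤ n) (a b : ℝ)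
    (ha0 : 0 < a) (ha1 : a < 1) (hb0 : 0 < b) (hb1 : b < 1) :
    min (∑ k ∈ range n, a ^ k) (∑ k ∈ range n, b ^ k) ≤
      (∑ k ∈ range j, a ^ k) + ∑ i ∈ range (n - j), b ^ (i + 1) := by
  rcases le_total (b ^ (n - j + 1)) (a ^ (j - 1)) with h | h
  · refine le_trans (min_le_right _ _) ?_
    have e1 : ∑ k ∈ range n, b ^ k
        = (∑ i ∈ range (n - j), b ^ (i + 1)
            + ∑ i ∈ range (j - 1), b ^ ((n - j) + i + 1)) + 1 := by
      rw [show range n = range ((n - j) + (j - 1) + 1) from by congr 1; omega,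
        Finset.sum_range_succ', Finset.sum_range_add, pow_zero]
    have e2 : ∑ k ∈ range j, a ^ k = ∑ i ∈ range (j - 1), a ^ (i + 1) + 1 := by
      rw [show range j = range ((j - 1) + 1) from by congr 1; omega,
        Finset.sum_range_succ', pow_zero]
    have hle : ∑ i ∈ range (j - 1), b ^ ((n - j) + i + 1)
        ≤ ∑ i ∈ range (j - 1), a ^ (i + 1) := by
      refine Finset.sum_le_sum fun i hi => ?_
      simp only [Finset.mem_range] at hi
      calc b ^ ((n - j) + i + 1) ≤ b ^ ((n - j) + 1) :=
            pow_le_pow_of_le_one hb0.le hb1.le (by omega)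
        _ ≤ a ^ (j - 1) := h
        _ ≤ a ^ (i + 1) := pow_le_pow_of_le_one ha0.le ha1.le (by omega)
    rw [e1, e2]; linarith
  · refine le_trans (min_le_left _ _) ?_
    have e3 : ∑ k ∈ range n, a ^ k
        = ∑ k ∈ range j, a ^ k + ∑ i ∈ range (n - j), a ^ (j + i) := by
      rw [show range n = range (j + (n - j)) from by congr 1; omega,
        Finset.sum_range_add]
    have hle : ∑ i ∈ range (n - j), a ^ (j + i)
        ≤ ∑ i ∈ range (n - j), b ^ (i + 1) := by
      refine Finset.sum_le_sum fun i hi => ?_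
      simp only [Finset.mem_range] at hi
      calc a ^ (j + i) ≤ a ^ (j - 1) :=
            pow_le_pow_of_le_one ha0.le ha1.le (by omega)
        _ ≤ b ^ ((n - j) + 1) := h
        _ ≤ b ^ (i + 1) := pow_le_pow_of_le_one hb0.le hb1.le (by omega)
    rw [e3]; linarith

theorem dollar_averaging_ratio (n : ℕ) (hn : 2 ≤ n) (α β : ℝ) (hα : 1 < α) (hβ : 1 < β)
    (B : ℕ → ℝ)
    (hB : ∀ j, B j = ∑ i ∈ Finset.Icc 1 n,
      (if i ≤ j then α ^ ((i : ℤ) - (j : ℤ)) else β ^ ((j : ℤ) - (i : ℤ)))) :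
    (Finset.Icc 1 n).sup' (Finset.nonempty_Icc.mpr (by omega)) (fun j => (n : ℝ) / B j) =
      max ((n : ℝ) * (1 - α⁻¹) / (1 - α⁻¹ ^ n)) ((n : ℝ) * (1 - β⁻¹) / (1 - β⁻¹ ^ n)) := by
  have hα0 : (0:ℝ) < α := lt_trans one_pos hα
  have hβ0 : (0:ℝ) < β := lt_trans one_pos hβ
  have ha0 : (0:ℝ) < α⁻¹ := inv_pos.mpr hα0
  have hb0 : (0:ℝ) < β⁻¹ := inv_pos.mpr hβ0
  have ha1 : α⁻¹ < 1 := inv_lt_one_of_one_lt₀ hα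
  have hb1 : β⁻¹ < 1 := inv_lt_one_of_one_lt₀ hβ
  have hBj : ∀ j, 1 ≤ j → j ≤ n →
      B j = (∑ k ∈ range j, α⁻¹ ^ k) + ∑ i ∈ range (n - j), β⁻¹ ^ (i + 1) := by
    intro j hj1 hjn
    rw [hB, ← Finset.sum_filter_add_sum_filter_not (Finset.Icc 1 n) (· ≤ j)]
    congr 1
    · rw [show (Finset.Icc 1 n).filter (· ≤ j) = Finset.Icc 1 j from by
        ext i; simp only [Finset.mem_filter, Finset.mem_Icc]; omega]
      have hc : ∀ i ∈ Finset.Icc 1 j,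
          (if i ≤ j then α ^ ((i : ℤ) - (j : ℤ)) else β ^ ((j : ℤ) - (i : ℤ)))
            = α⁻¹ ^ (j - i) := by
        intro i hi
        simp only [Finset.mem_Icc] at hi
        rw [if_pos hi.2]
        have h1 : (i : ℤ) - j = -((j - i : ℕ) : ℤ) := by omega
        rw [h1, zpow_neg, zpow_natCast, ← inv_pow]
      rw [Finset.sum_congr rfl hc, ← Finset.Ico_add_one_right_eq_Icc, Finset.sum_Ico_eq_sum_range]
      rw [← Finset.sum_range_reflect (fun k => α⁻¹ ^ k) j]
      refine Finset.sum_congr (by congr 1) fun i _ => by congr 1; omega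
    · rw [show (Finset.Icc 1 n).filter (fun i => ¬ i ≤ j) = Finset.Icc (j + 1) n from by
        ext i; simp only [Finset.mem_filter, Finset.mem_Icc]; omega]
      have hc : ∀ i ∈ Finset.Icc (j + 1) n,
          (if i ≤ j then α ^ ((i : ℤ) - (j : ℤ)) else β ^ ((j : ℤ) - (i : ℤ)))
            = β⁻¹ ^ (i - j) := by
        intro i hi
        simp only [Finset.mem_Icc] at hi
        rw [if_neg (by omega)]
        have h1 : (j : ℤ) - i = -((i - j : ℕ) : ℤ) := by omega
        rw [h1, zpow_neg, zpow_natCast, ← inv_pow]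
      rw [Finset.sum_congr rfl hc, ← Finset.Ico_add_one_right_eq_Icc, Finset.sum_Ico_eq_sum_range]
      refine Finset.sum_congr (by congr 1; omega) fun i _ => by congr 1; omega
  have hB1 : B 1 = ∑ k ∈ range n, β⁻¹ ^ k := by
    rw [hBj 1 le_rfl (by omega), Finset.sum_range_one, pow_zero,
      show range n = range ((n - 1) + 1) from by congr 1; omega,
      Finset.sum_range_succ', pow_zero, add_comm]
  have hBn : B n = ∑ k ∈ range n, α⁻¹ ^ k := by
    rw [hBj n (by omega) le_rfl]; simp
  have hpa : 0 < ∑ k ∈ range n, α⁻¹ ^ k :=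
    Finset.sum_pos (fun _ _ => pow_pos ha0 _) (nonempty_range_iff.mpr (by omega))
  have hpb : 0 < ∑ k ∈ range n, β⁻¹ ^ k :=
    Finset.sum_pos (fun _ _ => pow_pos hb0 _) (nonempty_range_iff.mpr (by omega))
  have hBjpos : ∀ j ∈ Finset.Icc 1 n, 0 < B j := by
    intro j hj
    simp only [Finset.mem_Icc] at hj
    rw [hBj j hj.1 hj.2]
    refine add_pos_of_pos_of_nonneg
      (Finset.sum_pos (fun _ _ => pow_pos ha0 _) (nonempty_range_iff.mpr (by omega)))
      (Finset.sum_nonneg fun _ _ => (pow_pos hb0 _).le)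
  have key : ∀ j ∈ Finset.Icc 1 n, min (B n) (B 1) ≤ B j := by
    intro j hj
    simp only [Finset.mem_Icc] at hj
    rw [hB1, hBn, hBj j hj.1 hj.2]
    exact aux_min_le n j hj.1 hj.2 _ _ ha0 ha1 hb0 hb1
  have hBnpos : 0 < B n := by rw [hBn]; exact hpa
  have hB1pos : 0 < B 1 := by rw [hB1]; exact hpb
  have hxa : (1:ℝ) - α⁻¹ ^ n ≠ 0 :=
    sub_ne_zero.mpr (ne_of_gt (pow_lt_one₀ ha0.le ha1 (by omega : n ≠ 0)))
  have hxb : (1:ℝ) - β⁻¹ ^ n ≠ 0 :=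
    sub_ne_zero.mpr (ne_of_gt (pow_lt_one₀ hb0.le hb1 (by omega : n ≠ 0)))
  have hya : (1:ℝ) - α⁻¹ ≠ 0 := sub_ne_zero.mpr (ne_of_gt ha1)
  have hyb : (1:ℝ) - β⁻¹ ≠ 0 := sub_ne_zero.mpr (ne_of_gt hb1)
  have e1 : (n : ℝ) / B n = (n : ℝ) * (1 - α⁻¹) / (1 - α⁻¹ ^ n) := by
    rw [hBn, geom_sum_eq (ne_of_lt ha1)]
    rw [show (α⁻¹ ^ n - 1) / (α⁻¹ - 1) = (1 - α⁻¹ ^ n) / (1 - α⁻¹) from by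
      rw [div_eq_div_iff (by intro hh; exact hya (by linarith)) hya]; ring]
    field_simp
  have e2 : (n : ℝ) / B 1 = (n : ℝ) * (1 - β⁻¹) / (1 - β⁻¹ ^ n) := by
    rw [hB1, geom_sum_eq (ne_of_lt hb1)]
    rw [show (β⁻¹ ^ n - 1) / (β⁻¹ - 1) = (1 - β⁻¹ ^ n) / (1 - β⁻¹) from by
      rw [div_eq_div_iff (by intro hh; exact hyb (by linarith)) hyb]; ring]
    field_simp
  rw [← e1, ← e2]
  apply le_antisymm
  · refine Finset.sup'_le _ _ fun j hj => ?_
    have hjp := hBjpos j hj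
    have hk := key j hj
    rcases le_total (B n) (B 1) with hc | hc
    · refine le_trans ?_ (le_max_left _ _)
      have hle : B n ≤ B j := le_trans (le_min le_rfl hc) hk
      gcongr
    · refine le_trans ?_ (le_max_right _ _)
      have hle : B 1 ≤ B j := le_trans (le_min hc le_rfl) hk
      gcongr
  · exact max_le
      (Finset.le_sup'_of_le _ (b := n) (Finset.mem_Icc.mpr ⟨by omega, le_rfl⟩) le_rfl)
      (Finset.le_sup'_of_le _ (b := 1) (Finset.mem_Icc.mpr ⟨le_rfl, by omega⟩) le_rfl)
end

section
/- The inverse of K satisfies uᵀK⁻¹ = b̄ᵀ and K⁻¹u = c̄, where b̄_1 = α(β-1)/(αβ-1), b̄_n = (α-1)β/(αβ-1), b̄_i = (α-1)(β-1)/(αβ-1) otherwise, and c̄ is obtained from b̄ by swapping the first and last components; here u is the all-ones vector. -/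
open Finset

private noncomputable def Kmat (α β : ℝ) (i j : ℕ) : ℝ :=
  if i ≤ j then α ^ ((i : ℤ) - (j : ℤ)) else β ^ ((j : ℤ) - (i : ℤ))

private noncomputable def Mmat (α β : ℝ) (n i j : ℕ) : ℝ :=
  if i = j then (if i = 0 ∨ i = n - 1 then α * β else α * β + 1) / (α * β - 1)
  else if i + 1 = j then -β / (α * β - 1)
  else if j + 1 = i then -α / (α * β - 1)
  else 0

private lemma Kmat_le {α β : ℝ} {i j : ℕ} (h : i ≤ j) :
    Kmat α β i j = α ^ ((i : ℤ) - (j : ℤ)) := by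
  simp [Kmat, h]

private lemma Kmat_ge {α β : ℝ} {i j : ℕ} (h : j ≤ i) :
    Kmat α β i j = β ^ ((j : ℤ) - (i : ℤ)) := by
  unfold Kmat
  rcases eq_or_lt_of_le h with rfl | h'
  · simp
  · rw [if_neg (by omega)]

private lemma Mmat_diag_end {α β : ℝ} {n i : ℕ} (h : i = 0 ∨ i = n - 1) :
    Mmat α β n i i = α * β / (α * β - 1) := by
  unfold Mmat; rw [if_pos rfl, if_pos h]

private lemma Mmat_diag_mid {α β : ℝ} {n i : ℕ} (h0 : i ≠ 0) (h1 : i ≠ n - 1) :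
    Mmat α β n i i = (α * β + 1) / (α * β - 1) := by
  unfold Mmat; rw [if_pos rfl, if_neg (by tauto)]

private lemma Mmat_super {α β : ℝ} {n i j : ℕ} (h : i + 1 = j) :
    Mmat α β n i j = -β / (α * β - 1) := by
  unfold Mmat; rw [if_neg (by omega), if_pos h]

private lemma Mmat_sub {α β : ℝ} {n i j : ℕ} (h : j + 1 = i) :
    Mmat α β n i j = -α / (α * β - 1) := by
  unfold Mmat; rw [if_neg (by omega), if_neg (by omega), if_pos h]

private lemma tri_sum (n i : ℕ) (hi : i < n) (f : ℕ → ℝ)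
    (hf : ∀ j, j < n → j ≠ i → j ≠ i + 1 → j + 1 ≠ i → f j = 0) :
    ∑ j ∈ Finset.range n, f j =
      (if 1 ≤ i then f (i - 1) else 0) + f i + (if i + 1 < n then f (i + 1) else 0) := by
  have key : ∀ j ∈ Finset.range n, f j =
      (if j + 1 = i then f (i - 1) else 0) + (if j = i then f i else 0)
        + (if j = i + 1 then f (i + 1) else 0) := by
    intro j hj
    rw [Finset.mem_range] at hj
    rcases eq_or_ne j i with rfl | h1
    · rw [if_neg (by omega), if_pos rfl, if_neg (by omega)]; ring
    rcases eq_or_ne j (i + 1) with rfl | h2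
    · rw [if_neg (by omega), if_neg (by omega), if_pos rfl]; ring
    rcases eq_or_ne (j + 1) i with h3 | h3
    · rw [if_pos h3, if_neg h1, if_neg h2]
      have hj' : j = i - 1 := by omega
      rw [hj']; ring
    · rw [if_neg h3, if_neg h1, if_neg h2, hf j hj h1 h2 h3]; ring
  rw [Finset.sum_congr rfl key, Finset.sum_add_distrib, Finset.sum_add_distrib]
  congr 1
  · congr 1
    · rcases Nat.eq_zero_or_pos i with rfl | h0
      · simp
      · rw [if_pos (by omega : 1 ≤ i)]
        have hcond : ∀ j : ℕ, (j + 1 = i) = (j = i - 1) := fun j => by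
          apply propext; omega
        calc ∑ j ∈ range n, (if j + 1 = i then f (i - 1) else 0)
            = ∑ j ∈ range n, (if j = i - 1 then f (i - 1) else 0) := by
              refine Finset.sum_congr rfl fun j _ => ?_
              exact if_congr (by omega) rfl rfl
          _ = f (i - 1) := by
              rw [Finset.sum_ite_eq' (range n) (i - 1) (fun _ => f (i - 1)),
                if_pos (Finset.mem_range.mpr (by omega))]
    · rw [Finset.sum_ite_eq' (range n) i (fun _ => f i), if_pos (Finset.mem_range.mpr hi)]
  · rw [Finset.sum_ite_eq' (range n) (i + 1) (fun _ => f (i + 1))]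
    simp [Finset.mem_range]

theorem K_inv_rows_cols (n : ℕ) (hn : 2 ≤ n) (α β : ℝ) (hα : 1 < α) (hβ : 1 < β)
    (K : Matrix (Fin n) (Fin n) ℝ)
    (hK : ∀ i j : Fin n, K i j =
      if (i : ℕ) ≤ (j : ℕ) then α ^ ((i : ℤ) - (j : ℤ)) else β ^ ((j : ℤ) - (i : ℤ)))
    (b c : Fin n → ℝ)
    (hb : ∀ i : Fin n, b i =
      if (i : ℕ) = 0 then α * (β - 1) / (α * β - 1)
      else if (i : ℕ) = n - 1 then (α - 1) * β / (α * β - 1)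
      else (α - 1) * (β - 1) / (α * β - 1))
    (hc : ∀ i : Fin n, c i =
      if (i : ℕ) = 0 then (α - 1) * β / (α * β - 1)
      else if (i : ℕ) = n - 1 then α * (β - 1) / (α * β - 1)
      else (α - 1) * (β - 1) / (α * β - 1)) :
    Matrix.vecMul (fun _ => (1 : ℝ)) K⁻¹ = b ∧ K⁻¹.mulVec (fun _ => (1 : ℝ)) = c := by
  have hα0 : α ≠ 0 := ne_of_gt (by linarith)
  have hβ0 : β ≠ 0 := ne_of_gt (by linarith)
  have hd : (0 : ℝ) < α * β - 1 := by nlinarith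
  have hd0 : α * β - 1 ≠ 0 := ne_of_gt hd
  set M : Matrix (Fin n) (Fin n) ℝ := Matrix.of (fun i j => Mmat α β n i j) with hMdef
  have hterm : ∀ i k j : Fin n, M i j * K j k = Mmat α β n i j * Kmat α β j k := by
    intro i k j
    rw [hK]
    rfl
  have hMK : M * K = 1 := by
    ext i k
    rw [Matrix.mul_apply, Matrix.one_apply]
    rw [Finset.sum_congr rfl (fun j _ => hterm i k j)]
    rw [Fin.sum_univ_eq_sum_range (fun j => Mmat α β n i j * Kmat α β j k) n]
    rw [tri_sum n i i.isLt _ (by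
      intro j hj h1 h2 h3
      have hz : Mmat α β n i j = 0 := by
        unfold Mmat
        rw [if_neg (by omega), if_neg (by omega), if_neg (by omega)]
      rw [hz, zero_mul])]
    by_cases h0 : (i : ℕ) = 0
    · rw [if_neg (by omega), if_pos (by omega), Mmat_diag_end (Or.inl h0),
        Mmat_super (show (i:ℕ) + 1 = (i:ℕ) + 1 from rfl)]
      by_cases hk : (k : ℕ) = 0
      · rw [if_pos (Fin.ext (by omega : (i:ℕ) = (k:ℕ))),
          Kmat_le (show (i:ℕ) ≤ (k:ℕ) by omega),
          Kmat_ge (show (k:ℕ) ≤ (i:ℕ) + 1 by omega),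
          show ((i:ℕ):ℤ) - ((k:ℕ):ℤ) = 0 by omega,
          show ((k:ℕ):ℤ) - (((i:ℕ) + 1 : ℕ):ℤ) = -1 by omega,
          zpow_zero, zpow_neg_one]
        field_simp
        ring
      · rw [if_neg (fun h => hk (by rw [← Fin.ext_iff.mp h]; omega)),
          Kmat_le (show (i:ℕ) ≤ (k:ℕ) by omega),
          Kmat_le (show (i:ℕ) + 1 ≤ (k:ℕ) by omega),
          show (((i:ℕ) + 1 : ℕ):ℤ) - ((k:ℕ):ℤ) = (((i:ℕ):ℤ) - ((k:ℕ):ℤ)) + 1 by omega,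
          zpow_add_one₀ hα0]
        field_simp
        ring
    · by_cases hL : (i : ℕ) = n - 1
      · rw [if_pos (by omega), if_neg (by omega), Mmat_diag_end (Or.inr hL),
          Mmat_sub (show ((i:ℕ) - 1) + 1 = (i:ℕ) by omega)]
        by_cases hk : (k : ℕ) = n - 1
        · rw [if_pos (Fin.ext (by omega : (i:ℕ) = (k:ℕ))),
            Kmat_le (show (i:ℕ) - 1 ≤ (k:ℕ) by omega),
            Kmat_le (show (i:ℕ) ≤ (k:ℕ) by omega),
            show (((i:ℕ) - 1 : ℕ):ℤ) - ((k:ℕ):ℤ) = -1 by omega,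
            show ((i:ℕ):ℤ) - ((k:ℕ):ℤ) = 0 by omega,
            zpow_zero, zpow_neg_one]
          field_simp
          ring
        · have hk' : (k:ℕ) < (i:ℕ) := by omega
          rw [if_neg (fun h => hk (by rw [← Fin.ext_iff.mp h]; omega)),
            Kmat_ge (show (k:ℕ) ≤ (i:ℕ) - 1 by omega),
            Kmat_ge (show (k:ℕ) ≤ (i:ℕ) by omega),
            show ((k:ℕ):ℤ) - (((i:ℕ) - 1 : ℕ):ℤ) = (((k:ℕ):ℤ) - ((i:ℕ):ℤ)) + 1 by omega,
            zpow_add_one₀ hβ0]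
          field_simp
          ring
      · have h1 : 1 ≤ (i:ℕ) := by omega
        have h2 : (i:ℕ) + 1 < n := by omega
        rw [if_pos h1, if_pos h2, Mmat_diag_mid h0 hL,
          Mmat_sub (show ((i:ℕ) - 1) + 1 = (i:ℕ) by omega),
          Mmat_super (show (i:ℕ) + 1 = (i:ℕ) + 1 from rfl)]
        rcases lt_trichotomy ((k:ℕ)) ((i:ℕ)) with hki | hki | hki
        · rw [if_neg (fun h => absurd (Fin.ext_iff.mp h) (by omega)),
            Kmat_ge (show (k:ℕ) ≤ (i:ℕ) - 1 by omega),
            Kmat_ge (show (k:ℕ) ≤ (i:ℕ) by omega),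
            Kmat_ge (show (k:ℕ) ≤ (i:ℕ) + 1 by omega),
            show ((k:ℕ):ℤ) - (((i:ℕ) - 1 : ℕ):ℤ) = (((k:ℕ):ℤ) - ((i:ℕ):ℤ)) + 1 by omega,
            show ((k:ℕ):ℤ) - (((i:ℕ) + 1 : ℕ):ℤ) = (((k:ℕ):ℤ) - ((i:ℕ):ℤ)) - 1 by omega,
            zpow_add_one₀ hβ0, zpow_sub_one₀ hβ0]
          field_simp
          ring
        · rw [if_pos (Fin.ext (by omega : (i:ℕ) = (k:ℕ))),
            Kmat_le (show (i:ℕ) - 1 ≤ (k:ℕ) by omega),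
            Kmat_le (show (i:ℕ) ≤ (k:ℕ) by omega),
            Kmat_ge (show (k:ℕ) ≤ (i:ℕ) + 1 by omega),
            show (((i:ℕ) - 1 : ℕ):ℤ) - ((k:ℕ):ℤ) = -1 by omega,
            show ((i:ℕ):ℤ) - ((k:ℕ):ℤ) = 0 by omega,
            show ((k:ℕ):ℤ) - (((i:ℕ) + 1 : ℕ):ℤ) = -1 by omega,
            zpow_zero, zpow_neg_one, zpow_neg_one]
          field_simp
          ring
        · rw [if_neg (fun h => absurd (Fin.ext_iff.mp h) (by omega)),
            Kmat_le (show (i:ℕ) - 1 ≤ (k:ℕ) by omega),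
            Kmat_le (show (i:ℕ) ≤ (k:ℕ) by omega),
            Kmat_le (show (i:ℕ) + 1 ≤ (k:ℕ) by omega),
            show (((i:ℕ) - 1 : ℕ):ℤ) - ((k:ℕ):ℤ) = (((i:ℕ):ℤ) - ((k:ℕ):ℤ)) - 1 by omega,
            show (((i:ℕ) + 1 : ℕ):ℤ) - ((k:ℕ):ℤ) = (((i:ℕ):ℤ) - ((k:ℕ):ℤ)) + 1 by omega,
            zpow_sub_one₀ hα0, zpow_add_one₀ hα0]
          field_simp
          ring

  have hinv : K⁻¹ = M := Matrix.inv_eq_left_inv hMK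
  constructor
  · funext i
    rw [hinv]
    have hsum : Matrix.vecMul (fun _ => (1:ℝ)) M i = ∑ j ∈ Finset.range n, Mmat α β n j (i:ℕ) := by
      simp only [Matrix.vecMul, dotProduct, one_mul, hMdef, Matrix.of_apply]
      exact Fin.sum_univ_eq_sum_range (fun j => Mmat α β n j (i:ℕ)) n
    rw [hsum, hb, tri_sum n i i.isLt _ (by
      intro j hj h1 h2 h3
      unfold Mmat
      rw [if_neg (by omega), if_neg (by omega), if_neg (by omega)])]
    by_cases h0 : (i:ℕ) = 0
    · rw [if_neg (by omega), if_pos (by omega), if_pos h0,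
        Mmat_diag_end (Or.inl h0),
        Mmat_sub (show (i:ℕ) + 1 = (i:ℕ) + 1 from rfl)]
      field_simp
      ring
    · by_cases hL : (i:ℕ) = n - 1
      · rw [if_pos (by omega), if_neg (by omega), if_neg h0, if_pos hL,
          Mmat_diag_end (Or.inr hL),
          Mmat_super (show ((i:ℕ) - 1) + 1 = (i:ℕ) by omega)]
        field_simp
        ring
      · rw [if_pos (by omega), if_pos (by omega), if_neg h0, if_neg hL,
          Mmat_diag_mid h0 hL,
          Mmat_super (show ((i:ℕ) - 1) + 1 = (i:ℕ) by omega),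
          Mmat_sub (show (i:ℕ) + 1 = (i:ℕ) + 1 from rfl)]
        field_simp
        ring

  · funext i
    rw [hinv]
    have hsum : Matrix.mulVec M (fun _ => (1:ℝ)) i = ∑ j ∈ Finset.range n, Mmat α β n (i:ℕ) j := by
      simp only [Matrix.mulVec, dotProduct, mul_one, hMdef, Matrix.of_apply]
      exact Fin.sum_univ_eq_sum_range (fun j => Mmat α β n (i:ℕ) j) n
    rw [hsum, hc, tri_sum n i i.isLt _ (by
      intro j hj h1 h2 h3
      unfold Mmat
      rw [if_neg (by omega), if_neg (by omega), if_neg (by omega)])]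
    by_cases h0 : (i:ℕ) = 0
    · rw [if_neg (by omega), if_pos (by omega), if_pos h0,
        Mmat_diag_end (Or.inl h0),
        Mmat_super (show (i:ℕ) + 1 = (i:ℕ) + 1 from rfl)]
      field_simp
      ring
    · by_cases hL : (i:ℕ) = n - 1
      · rw [if_pos (by omega), if_neg (by omega), if_neg h0, if_pos hL,
          Mmat_diag_end (Or.inr hL),
          Mmat_sub (show ((i:ℕ) - 1) + 1 = (i:ℕ) by omega)]
        field_simp
        ring
      · rw [if_pos (by omega), if_pos (by omega), if_neg h0, if_neg hL,
          Mmat_diag_mid h0 hL,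
          Mmat_sub (show ((i:ℕ) - 1) + 1 = (i:ℕ) by omega),
          Mmat_super (show (i:ℕ) + 1 = (i:ℕ) + 1 from rfl)]
        field_simp
        ring
end
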